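/- arXiv:1511.07020 — 5 statements merged into one kernel-verified Lean document; each statement's English description precedes it below -/
import Mathlib

section
/- Suppose x : [0,T) → ℝⁿ_{>0} is a solution of the Physarum dynamics ẋ = q − x for some finite T > 0, and the limit x(T) := lim_{t → T⁻} x(t) exists. Then x(T) is strictly positive, i.e., x(T) ∈ ℝⁿ_{>0}. -/
open Matrix Filter Set Topology

/-- The real matrix obtained from an integer matrix by coercion of entries. -/
noncomputable def rmat {m n : ℕ} (A : Matrix (Fin m) (Fin n) ℤ) :
    Matrix (Fin m) (Fin n) ℝ :=
  A.map (Int.cast : ℤ → ℝ)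

/-- The diagonal matrix `W = diag (x i / c i)`. -/
noncomputable def physW {n : ℕ} (c x : Fin n → ℝ) : Matrix (Fin n) (Fin n) ℝ :=
  Matrix.diagonal (fun i => x i / c i)

/-- The Physarum vector `q = W Aᵀ L⁻¹ b` where `L = A W Aᵀ`. -/
noncomputable def physQ {m n : ℕ} (B : Matrix (Fin m) (Fin n) ℝ) (b : Fin m → ℝ)
    (c x : Fin n → ℝ) : Fin n → ℝ :=
  physW c x *ᵥ (Bᵀ *ᵥ ((B * physW c x * Bᵀ)⁻¹ *ᵥ b))

/-- The set of absolute values of determinants of square submatrices of `A` (as reals). -/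
def subdets {m n : ℕ} (A : Matrix (Fin m) (Fin n) ℤ) : Set ℝ :=
  {d | ∃ (k : ℕ) (f : Fin k → Fin m) (g : Fin k → Fin n),
    Function.Injective f ∧ Function.Injective g ∧
    d = |((A.submatrix f g).det : ℝ)|}

/-- `x` is a solution of the Physarum dynamics `ẋ = q - x` on the time set `s`,
staying in the positive orthant. -/
def IsPhysSolOn {m n : ℕ} (B : Matrix (Fin m) (Fin n) ℝ) (b : Fin m → ℝ)
    (c : Fin n → ℝ) (x : ℝ → Fin n → ℝ) (s : Set ℝ) : Prop :=
  ∀ t ∈ s, (∀ i, 0 < x t i) ∧ HasDerivWithinAt x (physQ B b c (x t) - x t) s t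

/-- The auxiliary vector `p = L⁻¹ b`. -/
noncomputable def physP {m n : ℕ} (B : Matrix (Fin m) (Fin n) ℝ) (b : Fin m → ℝ)
    (c x : Fin n → ℝ) : Fin m → ℝ :=
  (B * physW c x * Bᵀ)⁻¹ *ᵥ b

/-- The auxiliary vector `u = Bᵀ p`. -/
noncomputable def physU {m n : ℕ} (B : Matrix (Fin m) (Fin n) ℝ) (b : Fin m → ℝ)
    (c x : Fin n → ℝ) : Fin n → ℝ :=
  Bᵀ *ᵥ physP B b c x

section Algebra

/-- rank = m implies `Bᵀ *ᵥ ·` is injective (kernel trivial). -/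
lemma rank_inj {B : Matrix (Fin m) (Fin n) ℝ} (hrank : B.rank = m)
    {v : Fin m → ℝ} (hv : Bᵀ *ᵥ v = 0) : v = 0 := by
  have hrT : (Bᵀ).rank = m := by rw [Matrix.rank_transpose]; exact hrank
  set f := (Bᵀ).mulVecLin with hf
  have hker : LinearMap.ker f = ⊥ := by
    have h1 : Module.finrank ℝ (LinearMap.range f) + Module.finrank ℝ (LinearMap.ker f)
        = Module.finrank ℝ (Fin m → ℝ) := LinearMap.finrank_range_add_finrank_ker f
    have h2 : Module.finrank ℝ (Fin m → ℝ) = m := by simp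
    have h3 : Module.finrank ℝ (LinearMap.range f) = m := hrT
    have : Module.finrank ℝ (LinearMap.ker f) = 0 := by omega
    exact Submodule.finrank_eq_zero.mp this
  have : v ∈ LinearMap.ker f := by
    rw [LinearMap.mem_ker, hf, Matrix.mulVecLin_apply]; exact hv
  rw [hker] at this; simpa using this



variable {m n : ℕ} (B : Matrix (Fin m) (Fin n) ℝ) (bb : Fin m → ℝ) (c x : Fin n → ℝ)

lemma physW_mulVec (v : Fin n → ℝ) :
    physW c x *ᵥ v = fun j => (x j / c j) * v j := by
  ext j
  simp [physW, Matrix.mulVec_diagonal]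

lemma physQ_apply :
    physQ B bb c x = fun j => (x j / c j) * physU B bb c x j := by
  rw [physQ, physW_mulVec]
  rfl

lemma quad_eq (v : Fin m → ℝ) :
    v ⬝ᵥ ((B * physW c x * Bᵀ) *ᵥ v) = ∑ j, (x j / c j) * ((Bᵀ *ᵥ v) j)^2 := by
  have h1 : (B * physW c x * Bᵀ) *ᵥ v = B *ᵥ (physW c x *ᵥ (Bᵀ *ᵥ v)) := by
    simp [Matrix.mulVec_mulVec, Matrix.mul_assoc]
  rw [h1, Matrix.dotProduct_mulVec]
  have h2 : v ᵥ* B = Bᵀ *ᵥ v := by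
    rw [Matrix.mulVec_transpose]
  rw [h2, physW_mulVec]
  simp only [dotProduct]
  exact Finset.sum_congr rfl fun j _ => by ring

lemma physL_det_isUnit (hrank : B.rank = m) (hc : ∀ i, 0 < c i) (hx : ∀ i, 0 < x i) :
    IsUnit (B * physW c x * Bᵀ).det := by
  rw [isUnit_iff_ne_zero]
  intro hdet
  obtain ⟨v, hv0, hv⟩ := (Matrix.exists_mulVec_eq_zero_iff.mpr hdet)
  have h0 : (0:ℝ) = ∑ j, (x j / c j) * ((Bᵀ *ᵥ v) j)^2 := by
    rw [← quad_eq, hv]; simp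
  have hterm : ∀ j ∈ Finset.univ, (0:ℝ) ≤ (x j / c j) * ((Bᵀ *ᵥ v) j)^2 :=
    fun j _ => mul_nonneg (div_nonneg (hx j).le (hc j).le) (sq_nonneg _)
  have hall : ∀ j ∈ Finset.univ, (x j / c j) * ((Bᵀ *ᵥ v) j)^2 = 0 :=
    (Finset.sum_eq_zero_iff_of_nonneg hterm).mp h0.symm
  have hu : Bᵀ *ᵥ v = 0 := by
    ext j
    have := hall j (Finset.mem_univ j)
    have hpos : 0 < x j / c j := div_pos (hx j) (hc j)
    have : ((Bᵀ *ᵥ v) j)^2 = 0 := by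
      rcases mul_eq_zero.mp this with h | h
      · exact absurd h hpos.ne'
      · exact h
    simpa using pow_eq_zero_iff (n := 2) (by norm_num) |>.mp this
  exact hv0 (rank_inj hrank hu)

lemma physB_mulVec_physQ (hdet : IsUnit (B * physW c x * Bᵀ).det) :
    B *ᵥ physQ B bb c x = bb := by
  rw [physQ]
  rw [Matrix.mulVec_mulVec, Matrix.mulVec_mulVec, Matrix.mulVec_mulVec]
  rw [show B * physW c x * Bᵀ * (B * physW c x * Bᵀ)⁻¹ = 1 by
        exact Matrix.mul_nonsing_inv _ hdet |>.symm ▸ rfl]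
  · simp
  
lemma dot_physP (v : Fin n → ℝ) :
    (B *ᵥ v) ⬝ᵥ physP B bb c x = ∑ j, v j * physU B bb c x j := by
  rw [dotProduct_comm, Matrix.dotProduct_mulVec]
  have h2 : physP B bb c x ᵥ* B = physU B bb c x := by
    rw [physU, Matrix.mulVec_transpose]
  rw [h2, dotProduct_comm]
  rfl

lemma physEnergy (hdet : IsUnit (B * physW c x * Bᵀ).det) :
    bb ⬝ᵥ physP B bb c x = ∑ j, (x j / c j) * (physU B bb c x j)^2 := by
  have hb : (B * physW c x * Bᵀ) *ᵥ physP B bb c x = bb := by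
    rw [physP, Matrix.mulVec_mulVec, Matrix.mul_nonsing_inv _ hdet, Matrix.one_mulVec]
  calc bb ⬝ᵥ physP B bb c x
      = physP B bb c x ⬝ᵥ ((B * physW c x * Bᵀ) *ᵥ physP B bb c x) := by
        rw [hb, dotProduct_comm]
    _ = ∑ j, (x j / c j) * (physU B bb c x j)^2 := quad_eq B c x _

lemma physEnergy_min (hdet : IsUnit (B * physW c x * Bᵀ).det)
    (hc : ∀ i, 0 < c i) (hx : ∀ i, 0 < x i)
    (z : Fin n → ℝ) (hz : B *ᵥ z = bb) :
    bb ⬝ᵥ physP B bb c x ≤ ∑ j, c j * (z j)^2 / x j := by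
  set u := physU B bb c x with hu
  set q := physQ B bb c x with hqdef
  have hq : ∀ j, q j = (x j / c j) * u j := by
    intro j; rw [hqdef, physQ_apply]
  have hd : B *ᵥ (z - q) = 0 := by
    rw [Matrix.mulVec_sub, hz, hqdef, physB_mulVec_physQ _ _ _ _ hdet, sub_self]
  have h0 : ∑ j, (z j - q j) * u j = 0 := by
    have h := dot_physP B bb c x (z - q)
    rw [hd, zero_dotProduct] at h
    have h2 : ∑ j, (z - q) j * u j = ∑ j, (z j - q j) * u j := rfl
    rw [← h2, ← h]
  have key : ∀ j, c j * (z j)^2 / x j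
      = (x j / c j) * (u j)^2 + 2*((z j - q j) * u j) + (c j / x j) * (z j - q j)^2 := by
    intro j
    have hcj := (hc j).ne'
    have hxj := (hx j).ne'
    rw [hq j]
    field_simp
    ring
  calc bb ⬝ᵥ physP B bb c x = ∑ j, (x j / c j) * (u j)^2 := physEnergy B bb c x hdet
    _ ≤ ∑ j, (x j / c j) * (u j)^2 + (2*∑ j, (z j - q j) * u j
          + ∑ j, (c j / x j) * (z j - q j)^2) := by
        rw [h0]
        have : (0:ℝ) ≤ ∑ j, (c j / x j) * (z j - q j)^2 :=
          Finset.sum_nonneg fun j _ => mul_nonneg (div_nonneg (hc j).le (hx j).le) (sq_nonneg _)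
        linarith
    _ = ∑ j, c j * (z j)^2 / x j := by
        rw [Finset.mul_sum, ← Finset.sum_add_distrib, ← Finset.sum_add_distrib]
        exact Finset.sum_congr rfl fun j _ => by rw [← add_assoc]; exact (key j).symm

end Algebra


section ODEHelpers

/-- Monotonicity from a derivative-within bound on `Ico 0 T`. -/
lemma mono_of_derivWithin {T : ℝ} {f f' : ℝ → ℝ}
    (hd : ∀ t ∈ Ico (0:ℝ) T, HasDerivWithinAt f (f' t) (Ico (0:ℝ) T) t)
    (h0 : ∀ t ∈ Ico (0:ℝ) T, 0 ≤ f' t) : MonotoneOn f (Ico (0:ℝ) T) := by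
  have hder : ∀ t ∈ interior (Ico (0:ℝ) T), HasDerivAt f (f' t) t := by
    intro t ht
    rw [interior_Ico] at ht
    exact (hd t (Ioo_subset_Ico_self ht)).hasDerivAt (Ico_mem_nhds ht.1 ht.2)
  refine monotoneOn_of_deriv_nonneg (convex_Ico 0 T)
    (fun t ht => (hd t ht).continuousWithinAt)
    (fun t ht => ((hder t ht).differentiableAt).differentiableWithinAt) ?_
  intro t ht
  rw [(hder t ht).deriv]
  rw [interior_Ico] at ht
  exact h0 t (Ioo_subset_Ico_self ht)

/-- A function with a limit at `T` from within `Ico 0 T` is bounded above there. -/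
lemma bddAbove_of_limit {T L : ℝ} (hT : 0 < T) {f : ℝ → ℝ}
    (hc : ContinuousOn f (Ico 0 T))
    (hl : Tendsto f (𝓝[Ico 0 T] T) (𝓝 L)) :
    ∃ M, ∀ t ∈ Ico (0:ℝ) T, f t ≤ M := by
  have hev : ∀ᶠ t in 𝓝[Ico 0 T] T, f t < L + 1 :=
    hl.eventually (eventually_lt_nhds (by linarith))
  rw [eventually_nhdsWithin_iff] at hev
  obtain ⟨δ, hδpos, hδ⟩ := Metric.eventually_nhds_iff.mp hev
  set t₀ : ℝ := max 0 (T - δ/2) with ht₀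
  have ht₀T : t₀ < T := by
    apply max_lt hT; linarith
  have hsub : Icc (0:ℝ) t₀ ⊆ Ico 0 T := fun s hs => ⟨hs.1, lt_of_le_of_lt hs.2 ht₀T⟩
  have hcpt : IsCompact (Icc (0:ℝ) t₀) := isCompact_Icc
  have hne : (Icc (0:ℝ) t₀).Nonempty := ⟨0, le_refl 0, le_max_left _ _⟩
  obtain ⟨s₀, _, hs₀⟩ := hcpt.exists_isMaxOn hne (hc.mono hsub)
  refine ⟨max (f s₀) (L + 1), ?_⟩
  intro t ht
  rcases le_or_gt t t₀ with h | h
  · exact le_trans (hs₀ ⟨ht.1, h⟩) (le_max_left _ _)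
  · have hdist : dist t T < δ := by
      rw [Real.dist_eq, abs_lt]
      constructor
      · have : T - δ/2 ≤ t₀ := le_max_right _ _
        linarith [ht.2]
      · linarith [ht.2, hδpos]
    exact le_trans (hδ hdist ht).le (le_max_right _ _)

/-- A positive function with positive limit at `T` is bounded below by a positive constant. -/
lemma pos_lb_of_limit {T L : ℝ} (hT : 0 < T) {f : ℝ → ℝ}
    (hc : ContinuousOn f (Ico 0 T))
    (hpos : ∀ t ∈ Ico (0:ℝ) T, 0 < f t)
    (hL : 0 < L)
    (hl : Tendsto f (𝓝[Ico 0 T] T) (𝓝 L)) :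
    ∃ ε > 0, ∀ t ∈ Ico (0:ℝ) T, ε ≤ f t := by
  have hev : ∀ᶠ t in 𝓝[Ico 0 T] T, L/2 < f t :=
    hl.eventually (eventually_gt_nhds (by linarith))
  rw [eventually_nhdsWithin_iff] at hev
  obtain ⟨δ, hδpos, hδ⟩ := Metric.eventually_nhds_iff.mp hev
  set t₀ : ℝ := max 0 (T - δ/2) with ht₀
  have ht₀T : t₀ < T := by apply max_lt hT; linarith
  have hsub : Icc (0:ℝ) t₀ ⊆ Ico 0 T := fun s hs => ⟨hs.1, lt_of_le_of_lt hs.2 ht₀T⟩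
  have hcpt : IsCompact (Icc (0:ℝ) t₀) := isCompact_Icc
  have hne : (Icc (0:ℝ) t₀).Nonempty := ⟨0, le_refl 0, le_max_left _ _⟩
  obtain ⟨s₀, hs₀mem, hs₀⟩ := hcpt.exists_isMinOn hne (hc.mono hsub)
  refine ⟨min (f s₀) (L/2), lt_min (hpos s₀ (hsub hs₀mem)) (by linarith), ?_⟩
  intro t ht
  rcases le_or_gt t t₀ with h | h
  · exact le_trans (min_le_left _ _) (hs₀ ⟨ht.1, h⟩)
  · have hdist : dist t T < δ := by
      rw [Real.dist_eq, abs_lt]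
      refine ⟨?_, by linarith [ht.2, hδpos]⟩
      have : T - δ/2 ≤ t₀ := le_max_right _ _
      linarith [ht.2]
    exact le_trans (min_le_right _ _) (hδ hdist ht).le

end ODEHelpers

/-- The log-Lyapunov argument: if the weighted logarithmic derivative is bounded below,
each coordinate with positive weight is bounded below by a positive constant. -/
lemma logLyap {n : ℕ} {T : ℝ} (hT : 0 < T) {x x' : ℝ → Fin n → ℝ}
    (hder : ∀ t ∈ Ico (0:ℝ) T, ∀ j, HasDerivWithinAt (fun r => x r j) (x' t j) (Ico (0:ℝ) T) t)
    (hxpos : ∀ t ∈ Ico (0:ℝ) T, ∀ j, 0 < x t j)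
    {γ : Fin n → ℝ} (hγ : ∀ j, 0 ≤ γ j)
    {X : ℝ} (hX1 : 1 ≤ X) (hX : ∀ t ∈ Ico (0:ℝ) T, ∀ j, x t j ≤ X)
    {K : ℝ} (hK0 : 0 ≤ K)
    (hK : ∀ t ∈ Ico (0:ℝ) T, -K ≤ ∑ j, γ j * (x' t j / x t j)) :
    ∀ j₀, 0 < γ j₀ → ∃ δ > 0, ∀ t ∈ Ico (0:ℝ) T, δ ≤ x t j₀ := by
  intro j₀ hγ0
  set φ : ℝ → ℝ := fun t => ∑ j, γ j * Real.log (x t j) with hφ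
  have hdφ : ∀ t ∈ Ico (0:ℝ) T, HasDerivWithinAt φ (∑ j, γ j * (x' t j / x t j))
      (Ico (0:ℝ) T) t := by
    intro t ht
    exact HasDerivWithinAt.fun_sum fun j _ =>
      ((hder t ht j).log (hxpos t ht j).ne').const_mul (γ j)
  have hmono : MonotoneOn (fun t => φ t + K * t) (Ico (0:ℝ) T) := by
    apply mono_of_derivWithin (f' := fun t => (∑ j, γ j * (x' t j / x t j)) + K)
    · intro t ht
      exact ((hdφ t ht).add ((hasDerivAt_id t).const_mul K).hasDerivWithinAt).congr_deriv
        (by ring)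
    · intro t ht
      have := hK t ht
      linarith
  have h0mem : (0:ℝ) ∈ Ico (0:ℝ) T := ⟨le_refl 0, hT⟩
  have hφlb : ∀ t ∈ Ico (0:ℝ) T, φ 0 - K * T ≤ φ t := by
    intro t ht
    have := hmono h0mem ht ht.1
    have hKt : K * t ≤ K * T := mul_le_mul_of_nonneg_left ht.2.le hK0
    simp only [mul_zero, add_zero] at this
    linarith
  set R : ℝ := ∑ j ∈ Finset.univ.erase j₀, γ j * Real.log X with hR
  have hkey : ∀ t ∈ Ico (0:ℝ) T, φ 0 - K * T - R ≤ γ j₀ * Real.log (x t j₀) := by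
    intro t ht
    have hsplit : φ t = γ j₀ * Real.log (x t j₀)
        + ∑ j ∈ Finset.univ.erase j₀, γ j * Real.log (x t j) := by
      rw [hφ]
      exact (Finset.add_sum_erase _ _ (Finset.mem_univ j₀)).symm
    have hrest : ∑ j ∈ Finset.univ.erase j₀, γ j * Real.log (x t j) ≤ R := by
      apply Finset.sum_le_sum
      intro j _
      exact mul_le_mul_of_nonneg_left
        (Real.log_le_log (hxpos t ht j) (hX t ht j)) (hγ j)
    have := hφlb t ht
    linarith
  refine ⟨Real.exp ((φ 0 - K * T - R) / γ j₀), Real.exp_pos _, ?_⟩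
  intro t ht
  have h1 : (φ 0 - K * T - R) / γ j₀ ≤ Real.log (x t j₀) := by
    rw [div_le_iff₀ hγ0]
    calc φ 0 - K * T - R ≤ γ j₀ * Real.log (x t j₀) := hkey t ht
      _ = Real.log (x t j₀) * γ j₀ := by ring
  calc Real.exp ((φ 0 - K * T - R) / γ j₀) ≤ Real.exp (Real.log (x t j₀)) :=
        Real.exp_le_exp.mpr h1
    _ = x t j₀ := Real.exp_log (hxpos t ht j₀)


theorem physarum_limit_positive {m n : ℕ} (A : Matrix (Fin m) (Fin n) ℤ)
    (hrank : (rmat A).rank = m)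
    (b : Fin m → ℤ) (c : Fin n → ℤ) (hc : ∀ i, 0 < c i)
    (hfeas : ∃ y : Fin n → ℝ, (rmat A *ᵥ y = fun j => (b j : ℝ)) ∧ ∀ i, 0 ≤ y i)
    (T : ℝ) (hT : 0 < T) (x : ℝ → Fin n → ℝ)
    (hsol : IsPhysSolOn (rmat A) (fun j => (b j : ℝ)) (fun i => (c i : ℝ)) x (Set.Ico 0 T))
    (xT : Fin n → ℝ)
    (hlim : Filter.Tendsto x (nhdsWithin T (Set.Ico 0 T)) (nhds xT)) :
    ∀ i, 0 < xT i := by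
  classical
  obtain ⟨y, hyfeas, hynn⟩ := hfeas
  intro i₀
  by_contra hi₀
  set B : Matrix (Fin m) (Fin n) ℝ := rmat A with hBdef
  set bb : Fin m → ℝ := fun j => (b j : ℝ) with hbbdef
  set cr : Fin n → ℝ := fun i => (c i : ℝ) with hcrdef
  have hcrpos : ∀ i, 0 < cr i := fun i => by
    simp only [hcrdef]; exact_mod_cast hc i
  set s : Set ℝ := Set.Ico 0 T with hsdef
  -- facts from the solution
  have hxpos : ∀ t ∈ s, ∀ j, 0 < x t j := fun t ht => (hsol t ht).1
  set q : ℝ → Fin n → ℝ := fun t => physQ B bb cr (x t) with hqdef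
  have hderiv : ∀ t ∈ s, ∀ j,
      HasDerivWithinAt (fun r => x r j) (q t j - x t j) s t := by
    intro t ht j
    have h := hasDerivWithinAt_pi.mp (hsol t ht).2 j
    simpa using h
  have hcont : ∀ j, ContinuousOn (fun t => x t j) s :=
    fun j t ht => (hderiv t ht j).continuousWithinAt
  have hlimj : ∀ j, Tendsto (fun t => x t j) (𝓝[s] T) (𝓝 (xT j)) :=
    fun j => tendsto_pi_nhds.mp hlim j
  haveI hNB : (𝓝[s] T).NeBot := by
    rw [← mem_closure_iff_nhdsWithin_neBot, hsdef, closure_Ico hT.ne]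
    exact ⟨hT.le, le_refl T⟩
  have hxTnn : ∀ j, 0 ≤ xT j := fun j =>
    ge_of_tendsto (hlimj j) (eventually_mem_nhdsWithin.mono fun t ht => (hxpos t ht j).le)
  have hxTi₀ : xT i₀ = 0 := le_antisymm (not_lt.mp hi₀) (hxTnn i₀)
  have h0s : (0:ℝ) ∈ s := ⟨le_refl 0, hT⟩
  -- global upper bound
  have hXj : ∀ j, ∃ M, ∀ t ∈ s, x t j ≤ M := fun j =>
    bddAbove_of_limit hT (hcont j) (hlimj j)
  choose Xf hXf using hXj
  have huniv_ne : (Finset.univ : Finset (Fin n)).Nonempty := ⟨i₀, Finset.mem_univ i₀⟩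
  set X : ℝ := max 1 (Finset.univ.sup' huniv_ne Xf) with hXdef
  have hX1 : 1 ≤ X := le_max_left _ _
  have hX : ∀ t ∈ s, ∀ j, x t j ≤ X := fun t ht j =>
    le_trans (hXf j t ht) (le_trans (Finset.le_sup' Xf (Finset.mem_univ j)) (le_max_right _ _))
  -- determinant invertibility along the trajectory
  have hdet : ∀ t ∈ s, IsUnit (B * physW cr (x t) * Bᵀ).det := fun t ht =>
    physL_det_isUnit B cr (x t) hrank hcrpos (hxpos t ht)
  -- the fundamental sum identity
  have hsumid : ∀ t ∈ s, ∀ v : Fin n → ℝ,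
      ∑ j, (cr j * v j) * ((q t j - x t j) / x t j)
        = (B *ᵥ v) ⬝ᵥ physP B bb cr (x t) - ∑ j, cr j * v j := by
    intro t ht v
    rw [dot_physP, ← Finset.sum_sub_distrib]
    refine Finset.sum_congr rfl fun j _ => ?_
    have hxj := (hxpos t ht j).ne'
    have hcj := (hcrpos j).ne'
    have hqj : q t j = (x t j / cr j) * physU B bb cr (x t) j := by
      rw [hqdef]
      exact congrFun (physQ_apply B bb cr (x t)) j
    rw [hqj]
    field_simp
  have hEnn : ∀ t ∈ s, 0 ≤ bb ⬝ᵥ physP B bb cr (x t) := by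
    intro t ht
    rw [physEnergy B bb cr (x t) (hdet t ht)]
    exact Finset.sum_nonneg fun j _ =>
      mul_nonneg (div_nonneg (hxpos t ht j).le (hcrpos j).le) (sq_nonneg _)
  -- step (ii): coordinates in the support of y are bounded below
  have hyV : ∀ j, y j ≠ 0 → 0 < xT j := by
    intro j hyj
    have hyjpos : 0 < y j := (hynn j).lt_of_ne (Ne.symm hyj)
    have hγnn : ∀ k, 0 ≤ cr k * y k := fun k => mul_nonneg (hcrpos k).le (hynn k)
    have hβnn : (0:ℝ) ≤ ∑ k, cr k * y k := Finset.sum_nonneg fun k _ => hγnn k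
    have hK : ∀ t ∈ s, -(∑ k, cr k * y k)
        ≤ ∑ k, (cr k * y k) * ((q t k - x t k) / x t k) := by
      intro t ht
      rw [hsumid t ht y, hyfeas]
      have := hEnn t ht
      linarith
    obtain ⟨δ, hδ, hδb⟩ := logLyap hT
      (fun t ht j => hderiv t ht j) hxpos hγnn hX1 hX hβnn hK j
      (mul_pos (hcrpos j) hyjpos)
    have : δ ≤ xT j :=
      ge_of_tendsto (hlimj j) (eventually_mem_nhdsWithin.mono fun t ht => hδb t ht)
    linarith
  -- energy bound along the trajectory
  have hδy : ∀ j, ∃ d, 0 < d ∧ (y j ≠ 0 → ∀ t ∈ s, d ≤ x t j) := by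
    intro j
    by_cases hyj : y j = 0
    · exact ⟨1, one_pos, fun h => absurd hyj h⟩
    · obtain ⟨d, hd, hb⟩ := pos_lb_of_limit hT (hcont j)
        (fun t ht => hxpos t ht j) (hyV j hyj) (hlimj j)
      exact ⟨d, hd, fun _ t ht => hb t ht⟩
  choose δy hδy0 hδyb using hδy
  set C : ℝ := ∑ j, cr j * (y j)^2 / δy j with hCdef
  have hCb : ∀ t ∈ s, bb ⬝ᵥ physP B bb cr (x t) ≤ C := by
    intro t ht
    refine le_trans (physEnergy_min B bb cr (x t) (hdet t ht) hcrpos (hxpos t ht) y hyfeas) ?_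
    refine Finset.sum_le_sum fun j _ => ?_
    by_cases hyj : y j = 0
    · simp [hyj]
    · have h1 : 0 < δy j := hδy0 j
      have h2 : δy j ≤ x t j := hδyb j hyj t ht
      have h3 : (0:ℝ) ≤ cr j * (y j)^2 := mul_nonneg (hcrpos j).le (sq_nonneg _)
      gcongr
  have hC0 : 0 ≤ C := le_trans (hEnn 0 h0s) (hCb 0 h0s)
  -- lower bounds for non-vanishing coordinates
  have hε : ∀ j, ∃ e, 0 < e ∧ (xT j ≠ 0 → ∀ t ∈ s, e ≤ x t j) := by
    intro j
    by_cases hj : xT j = 0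
    · exact ⟨1, one_pos, fun h => absurd hj h⟩
    · obtain ⟨e, he, hb⟩ := pos_lb_of_limit hT (hcont j)
        (fun t ht => hxpos t ht j) ((hxTnn j).lt_of_ne (Ne.symm hj)) (hlimj j)
      exact ⟨e, he, fun _ t ht => hb t ht⟩
  choose εf hεf0 hεfb using hε
  -- u' : the initial vector restricted to vanishing coordinates
  set u' : Fin n → ℝ := fun j => if xT j = 0 then x 0 j else 0 with hu'def
  have hu'nn : ∀ j, 0 ≤ u' j := by
    intro j
    rw [hu'def]
    by_cases hj : xT j = 0
    · simpa [hj] using (hxpos 0 h0s j).le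
    · simp [hj]
  -- the conserved-quantity argument
  have hg : ∀ lam : Fin m → ℝ, (∀ j, xT j ≠ 0 → (Bᵀ *ᵥ lam) j = 0) →
      lam ⬝ᵥ (B *ᵥ u') = 0 := by
    intro lam hlam
    set γg : Fin n → ℝ := fun j => (Bᵀ *ᵥ lam) j with hγgdef
    set g : ℝ → ℝ := fun t => ∑ j, γg j * x t j with hgdef
    have hlb : lam ⬝ᵥ bb = 0 := by
      rw [← hyfeas, dotProduct_mulVec, ← Matrix.mulVec_transpose]
      refine Finset.sum_eq_zero fun j _ => ?_
      by_cases hyj : y j = 0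
      · simp [hyj]
      · rw [show (Bᵀ *ᵥ lam) j = 0 from hlam j (hyV j hyj).ne', zero_mul]
    have hBq : ∀ t ∈ s, B *ᵥ q t = bb := fun t ht =>
      physB_mulVec_physQ B bb cr (x t) (hdet t ht)
    have hgd : ∀ t ∈ s, HasDerivWithinAt g (-(g t)) s t := by
      intro t ht
      have h1 : HasDerivWithinAt g (∑ j, γg j * (q t j - x t j)) s t :=
        HasDerivWithinAt.fun_sum fun j _ => (hderiv t ht j).const_mul (γg j)
      have h3 : ∑ j, γg j * q t j = lam ⬝ᵥ (B *ᵥ q t) := by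
        rw [dotProduct_mulVec, ← Matrix.mulVec_transpose]; rfl
      have h2 : ∑ j, γg j * (q t j - x t j) = -(g t) := by
        have h4 : ∑ j, γg j * (q t j - x t j)
            = ∑ j, γg j * q t j - ∑ j, γg j * x t j := by
          rw [← Finset.sum_sub_distrib]
          exact Finset.sum_congr rfl fun j _ => mul_sub _ _ _
        rw [h4, h3, hBq t ht, hlb, hgdef]
        ring
      rw [← h2]; exact h1
    set G : ℝ → ℝ := fun t => g t * Real.exp t with hGdef
    have hGd : ∀ t ∈ s, HasDerivWithinAt G 0 s t := by
      intro t ht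
      have h := (hgd t ht).mul (Real.hasDerivAt_exp t).hasDerivWithinAt
      have h0 : -g t * Real.exp t + g t * Real.exp t = 0 := by ring
      rw [← h0]
      exact h
    have hmonoG := mono_of_derivWithin (f' := fun _ => (0:ℝ)) hGd fun _ _ => le_refl 0
    have hantiG := mono_of_derivWithin (f := fun t => -G t) (f' := fun _ => (0:ℝ))
      (fun t ht => by have h := (hGd t ht).neg; rw [neg_zero] at h; exact h) fun _ _ => le_refl 0
    have hGconst : ∀ t ∈ s, G t = G 0 := by
      intro t ht
      have h1 := hmonoG h0s ht ht.1
      have h2 := hantiG h0s ht ht.1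
      simp only [neg_le_neg_iff] at h2
      linarith
    have hgt : ∀ t ∈ s, g t = g 0 * Real.exp (-t) := by
      intro t ht
      have h := hGconst t ht
      rw [hGdef] at h
      simp only [Real.exp_zero, mul_one] at h
      rw [← h, Real.exp_neg, mul_assoc, mul_inv_cancel₀ (Real.exp_ne_zero t), mul_one]
    have htendg : Tendsto g (𝓝[s] T) (𝓝 (∑ j, γg j * xT j)) :=
      tendsto_finset_sum _ fun j _ => (hlimj j).const_mul (γg j)
    have hzero : ∑ j, γg j * xT j = 0 := by
      refine Finset.sum_eq_zero fun j _ => ?_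
      by_cases hj : xT j = 0
      · rw [hj, mul_zero]
      · rw [show γg j = 0 from hlam j hj, zero_mul]
    have htendg2 : Tendsto (fun t => g 0 * Real.exp (-t)) (𝓝[s] T)
        (𝓝 (g 0 * Real.exp (-T))) := by
      apply Tendsto.mono_left _ nhdsWithin_le_nhds
      exact (continuous_const.mul (Real.continuous_exp.comp continuous_neg)).tendsto T
    have hgeq : g 0 * Real.exp (-T) = 0 := by
      have hcongr : Tendsto g (𝓝[s] T) (𝓝 (g 0 * Real.exp (-T))) :=
        htendg2.congr' (eventually_mem_nhdsWithin.mono fun t ht => (hgt t ht).symm)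
      exact tendsto_nhds_unique hcongr (hzero ▸ htendg)
    have hg0 : g 0 = 0 := by
      rcases mul_eq_zero.mp hgeq with h | h
      · exact h
      · exact absurd h (Real.exp_ne_zero _)
    rw [dotProduct_mulVec, ← Matrix.mulVec_transpose]
    calc (Bᵀ *ᵥ lam) ⬝ᵥ u' = ∑ j, γg j * u' j := rfl
      _ = ∑ j, γg j * x 0 j := by
          refine Finset.sum_congr rfl fun j _ => ?_
          by_cases hj : xT j = 0
          · rw [hu'def]; simp [hj]
          · rw [show γg j = 0 from hlam j hj, zero_mul, zero_mul]
      _ = g 0 := rfl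
      _ = 0 := hg0
    -- express B *ᵥ u' as a combination of columns with non-vanishing coordinates
  set col : Fin n → (Fin m → ℝ) := fun j i => B i j with hcoldef
  set e : (Fin m → ℝ) ≃ₗ[ℝ] EuclideanSpace ℝ (Fin m) :=
    (WithLp.linearEquiv 2 ℝ (Fin m → ℝ)).symm with hedef
  set f : {j : Fin n // xT j ≠ 0} → EuclideanSpace ℝ (Fin m) :=
    fun k => e (col k.1) with hfdef
  have hinner : ∀ (w v : EuclideanSpace ℝ (Fin m)),
      (inner ℝ w v : ℝ) = ∑ i, w i * v i := by
    intro w v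
    rw [PiLp.inner_apply]
    exact Finset.sum_congr rfl fun i _ => by simp [mul_comm]
  have heapp : ∀ (v : Fin m → ℝ) (i : Fin m), e v i = v i := fun v i => rfl
  have hmem : e (B *ᵥ u') ∈ Submodule.span ℝ (Set.range f) := by
    rw [← Submodule.orthogonal_orthogonal (Submodule.span ℝ (Set.range f))]
    rw [Submodule.mem_orthogonal]
    intro w hw
    set lam : Fin m → ℝ := fun i => w i with hlamdef
    have hlam : ∀ j, xT j ≠ 0 → (Bᵀ *ᵥ lam) j = 0 := by
      intro j hj
      have hwk := (Submodule.mem_orthogonal' _ w).mp hw (f ⟨j, hj⟩)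
        (Submodule.subset_span (Set.mem_range_self _))
      rw [hinner] at hwk
      rw [Matrix.mulVec]
      rw [← hwk]
      simp only [hfdef, heapp, hcoldef, dotProduct]
      exact Finset.sum_congr rfl fun i _ => by rw [Matrix.transpose_apply]; ring
    have hfin := hg lam hlam
    rw [hinner]
    rw [← hfin]
    simp only [dotProduct, heapp, hlamdef]
  rw [Submodule.mem_span_range_iff_exists_fun] at hmem
  obtain ⟨coef, hcoef⟩ := hmem
  have hBu' : B *ᵥ u' = ∑ k : {j : Fin n // xT j ≠ 0}, coef k • col k.1 := by
    apply e.injective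
    rw [map_sum]
    simp only [_root_.map_smul]
    exact hcoef.symm
  set μ : Fin n → ℝ := fun j => if h : xT j = 0 then 0 else coef ⟨j, h⟩ with hμdef
  have hμV : ∀ j, xT j = 0 → μ j = 0 := fun j hj => by rw [hμdef]; simp [hj]
  have hBμ : B *ᵥ μ = B *ᵥ u' := by
    rw [hBu']
    have h1 : B *ᵥ μ = ∑ j, μ j • col j := by
      ext i
      rw [Finset.sum_apply]
      simp only [Matrix.mulVec, dotProduct, hcoldef, Pi.smul_apply, smul_eq_mul]
      exact Finset.sum_congr rfl fun j _ => mul_comm _ _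
    rw [h1]
    have h2 : ∑ j, μ j • col j
        = ∑ j ∈ Finset.univ.filter (fun j => xT j ≠ 0), μ j • col j := by
      symm
      apply Finset.sum_subset (Finset.filter_subset _ _)
      intro j _ hj
      simp only [Finset.mem_filter, Finset.mem_univ, true_and, not_not] at hj
      rw [hμV j hj, zero_smul]
    rw [h2]
    rw [Finset.sum_subtype (p := fun j => xT j ≠ 0)
      (Finset.univ.filter (fun j => xT j ≠ 0)) (fun j => by simp) (fun j => μ j • col j)]
    refine Finset.sum_congr rfl fun k _ => ?_
    have : μ k.1 = coef k := by
      simp only [hμdef, dif_neg k.2]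
    rw [this]
  -- the final log-Lyapunov argument on the vanishing block
  have hγtnn : ∀ j, 0 ≤ cr j * u' j := fun j => mul_nonneg (hcrpos j).le (hu'nn j)
  set βt : ℝ := ∑ j, cr j * u' j with hβtdef
  have hβtnn : 0 ≤ βt := Finset.sum_nonneg fun j _ => hγtnn j
  set K1 : ℝ := ∑ j, |μ j| * Real.sqrt (C * cr j / εf j) with hK1def
  have hK1nn : 0 ≤ K1 := Finset.sum_nonneg fun j _ =>
    mul_nonneg (abs_nonneg _) (Real.sqrt_nonneg _)
  have hKnn : (0:ℝ) ≤ K1 + βt := by linarith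
  have hKbound : ∀ t ∈ s, -(K1 + βt)
      ≤ ∑ j, (cr j * u' j) * ((q t j - x t j) / x t j) := by
    intro t ht
    rw [hsumid t ht u', ← hBμ, dot_physP]
    have hterm : ∀ j ∈ Finset.univ,
        -(|μ j| * Real.sqrt (C * cr j / εf j)) ≤ μ j * physU B bb cr (x t) j := by
      intro j _
      by_cases hμj : μ j = 0
      · simp [hμj]
      · have hjV : xT j ≠ 0 := fun h => hμj (hμV j h)
        have hxε : εf j ≤ x t j := hεfb j hjV t ht
        have husq : (x t j / cr j) * (physU B bb cr (x t) j)^2 ≤ C := by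
          refine le_trans ?_ (hCb t ht)
          rw [physEnergy B bb cr (x t) (hdet t ht)]
          exact Finset.single_le_sum (fun k _ =>
            mul_nonneg (div_nonneg (hxpos t ht k).le (hcrpos k).le) (sq_nonneg _))
            (Finset.mem_univ j)
        have hu2 : (physU B bb cr (x t) j)^2 ≤ C * cr j / εf j := by
          have h2 : (physU B bb cr (x t) j)^2 ≤ C * cr j / x t j := by
            rw [le_div_iff₀ (hxpos t ht j)]
            have hcrj : cr j ≠ 0 := (hcrpos j).ne'
            have h5 : (physU B bb cr (x t) j)^2 * x t j
                = ((x t j / cr j) * (physU B bb cr (x t) j)^2) * cr j := by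
              field_simp
            rw [h5]
            exact mul_le_mul_of_nonneg_right husq (hcrpos j).le
          refine le_trans h2 ?_
          have hnum : (0:ℝ) ≤ C * cr j := mul_nonneg hC0 (hcrpos j).le
          have hεp : 0 < εf j := hεf0 j
          gcongr
        have habs : |physU B bb cr (x t) j| ≤ Real.sqrt (C * cr j / εf j) := by
          rw [← Real.sqrt_sq_eq_abs]
          exact Real.sqrt_le_sqrt hu2
        calc -(|μ j| * Real.sqrt (C * cr j / εf j))
            ≤ -(|μ j| * |physU B bb cr (x t) j|) := by
              apply neg_le_neg
              exact mul_le_mul_of_nonneg_left habs (abs_nonneg _)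
          _ = -|μ j * physU B bb cr (x t) j| := by rw [abs_mul]
          _ ≤ μ j * physU B bb cr (x t) j := neg_abs_le _
    have hsum := Finset.sum_le_sum hterm
    have hneg : ∑ j, -(|μ j| * Real.sqrt (C * cr j / εf j)) = -K1 := by
      rw [hK1def, ← Finset.sum_neg_distrib]
    rw [hneg] at hsum
    linarith
  have hγti₀ : 0 < cr i₀ * u' i₀ := by
    apply mul_pos (hcrpos i₀)
    rw [hu'def]
    simp only [hxTi₀, if_pos]
    exact hxpos 0 h0s i₀
  obtain ⟨δ, hδ, hδb⟩ := logLyap hT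
    (fun t ht j => hderiv t ht j) hxpos hγtnn hX1 hX hKnn hKbound i₀ hγti₀
  have hfin : δ ≤ xT i₀ :=
    ge_of_tendsto (hlimj i₀) (eventually_mem_nhdsWithin.mono fun t ht => hδb t ht)
  rw [hxTi₀] at hfin
  linarith
end

section
/- Suppose x : [0,T) → ℝⁿ_{>0} is a solution of the Physarum dynamics ẋ = q − x for some finite T > 0, let y be any feasible solution (A y = b, y ≥ 0), and suppose the limit x(T) := lim_{t → T⁻} x(t) exists. Then xᵢ(T) > 0 for every i in the support of y, i.e., every i with yᵢ > 0. -/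
open Matrix Filter Set Topology

lemma key {m n : ℕ} (B : Matrix (Fin m) (Fin n) ℝ) (b : Fin m → ℝ) (c xv y : Fin n → ℝ)
    (hc : ∀ i, 0 < c i) (hx : ∀ i, 0 < xv i) (hyb : B *ᵥ y = b) :
    0 ≤ ∑ i, c i * y i * (physQ B b c xv i / xv i) := by
  set L := B * physW c xv * Bᵀ with hL
  set p := L⁻¹ *ᵥ b with hp
  have hq : ∀ i, physQ B b c xv i = (xv i / c i) * (Bᵀ *ᵥ p) i := by
    intro i
    simp [physQ, physW, Matrix.mulVec_diagonal, hp, hL]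
  have hsum : ∑ i, c i * y i * (physQ B b c xv i / xv i) = b ⬝ᵥ p := by
    have : ∀ i, c i * y i * (physQ B b c xv i / xv i) = y i * (Bᵀ *ᵥ p) i := by
      intro i
      have h1 : c i ≠ 0 := (hc i).ne'
      have h2 : xv i ≠ 0 := (hx i).ne'
      rw [hq i]
      field_simp
    rw [Finset.sum_congr rfl (fun i _ => this i)]
    rw [← dotProduct, Matrix.dotProduct_mulVec, Matrix.vecMul_transpose, hyb]
  rw [hsum]
  by_cases hdet : IsUnit L.det
  · have hb : L *ᵥ p = b := by
      rw [hp, Matrix.mulVec_mulVec, Matrix.mul_nonsing_inv _ hdet, Matrix.one_mulVec]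
    have : b ⬝ᵥ p = (Bᵀ *ᵥ p) ⬝ᵥ (physW c xv *ᵥ (Bᵀ *ᵥ p)) := by
      rw [← hb, dotProduct_comm, hL, ← Matrix.mulVec_mulVec, ← Matrix.mulVec_mulVec,
        Matrix.dotProduct_mulVec, ← Matrix.mulVec_transpose]
    rw [this]
    rw [dotProduct, ]
    apply Finset.sum_nonneg
    intro i _
    rw [physW, Matrix.mulVec_diagonal, mul_comm, mul_assoc]
    have h3 : 0 ≤ (Bᵀ *ᵥ p) i * (Bᵀ *ᵥ p) i := mul_self_nonneg _
    have h4 : 0 ≤ xv i / c i := div_nonneg (hx i).le (hc i).le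
    exact mul_nonneg h4 h3
  · simp [hp, Matrix.nonsing_inv_apply_not_isUnit _ hdet]

lemma bdd_of_tendsto {n : ℕ} (T : ℝ) (hT : 0 < T) (x : ℝ → Fin n → ℝ)
    (hcont : ContinuousOn x (Set.Ico 0 T)) (xT : Fin n → ℝ)
    (hlim : Filter.Tendsto x (nhdsWithin T (Set.Ico 0 T)) (nhds xT)) :
    ∃ M : ℝ, 1 ≤ M ∧ ∀ t ∈ Set.Ico 0 T, ∀ j, x t j ≤ M := by
  set s := Set.Ico (0:ℝ) T
  set xt : ℝ → Fin n → ℝ := fun t => if t = T then xT else x t with hxt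
  have hins : Set.Icc (0:ℝ) T = insert T s := (Set.Ico_insert_right hT.le).symm
  have hco : ContinuousOn xt (Set.Icc 0 T) := by
    intro t ht
    by_cases htT : t = T
    · subst htT
      rw [ContinuousWithinAt, hins, nhdsWithin_insert]
      have h1 : xt t = xT := if_pos rfl
      rw [h1]
      refine Filter.Tendsto.sup ?_ ?_
      · have : xt t = xT := if_pos rfl
        rw [← this]
        exact tendsto_pure_nhds xt t
      · refine hlim.congr' ?_
        filter_upwards [eventually_mem_nhdsWithin] with u hu
        exact (if_neg (ne_of_lt hu.2)).symm
    · have hts : t ∈ s := ⟨ht.1, lt_of_le_of_ne ht.2 htT⟩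
      rw [ContinuousWithinAt, hins, nhdsWithin_insert_of_ne htT]
      have h1 : xt t = x t := if_neg htT
      rw [h1]
      refine (hcont t hts).congr' ?_
      filter_upwards [eventually_mem_nhdsWithin] with u hu
      exact (if_neg (ne_of_lt hu.2)).symm
  have hnorm : ContinuousOn (fun t => ‖xt t‖) (Set.Icc 0 T) := hco.norm
  obtain ⟨z, hz, hzmax⟩ := isCompact_Icc.exists_isMaxOn ⟨0, by constructor <;> [rfl; exact hT.le]⟩ hnorm
  refine ⟨max 1 ‖xt z‖, le_max_left _ _, fun t ht j => ?_⟩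
  have h1 : x t j ≤ ‖x t‖ := (le_abs_self _).trans (by rw [← Real.norm_eq_abs]; exact norm_le_pi_norm (x t) j)
  have h2 : x t = xt t := (if_neg (ne_of_lt ht.2)).symm
  have h3 : ‖xt t‖ ≤ ‖xt z‖ := hzmax (by rw [hins]; exact Set.mem_insert_of_mem _ ht)
  calc x t j ≤ ‖x t‖ := h1
    _ = ‖xt t‖ := by rw [h2]
    _ ≤ ‖xt z‖ := h3
    _ ≤ max 1 ‖xt z‖ := le_max_right _ _

theorem physarum_limit_positive_on_support {m n : ℕ} (A : Matrix (Fin m) (Fin n) ℤ)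
    (hrank : (rmat A).rank = m)
    (b : Fin m → ℤ) (c : Fin n → ℤ) (hc : ∀ i, 0 < c i)
    (T : ℝ) (hT : 0 < T) (x : ℝ → Fin n → ℝ)
    (hsol : IsPhysSolOn (rmat A) (fun j => (b j : ℝ)) (fun i => (c i : ℝ)) x (Set.Ico 0 T))
    (y : Fin n → ℝ) (hyb : rmat A *ᵥ y = fun j => (b j : ℝ)) (hy : ∀ i, 0 ≤ y i)
    (xT : Fin n → ℝ)
    (hlim : Filter.Tendsto x (nhdsWithin T (Set.Ico 0 T)) (nhds xT)) :
    ∀ i, 0 < y i → 0 < xT i := by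
  set B := rmat A with hB
  set bb : Fin m → ℝ := fun j => (b j : ℝ) with hbb
  set cc : Fin n → ℝ := fun i => (c i : ℝ) with hcc
  have hccpos : ∀ i, 0 < cc i := fun i => by simp only [hcc]; exact_mod_cast hc i
  set s := Set.Ico (0:ℝ) T with hs
  have hpos : ∀ t ∈ s, ∀ i, 0 < x t i := fun t ht => (hsol t ht).1
  have hcont : ContinuousOn x s := fun t ht => (hsol t ht).2.continuousWithinAt
  obtain ⟨M, hM1, hMb⟩ := bdd_of_tendsto T hT x hcont xT hlim
  set C := ∑ j, cc j * y j with hC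
  have hC0 : 0 ≤ C := Finset.sum_nonneg fun j _ => mul_nonneg (hccpos j).le (hy j)
  set V : ℝ → ℝ := fun t => ∑ j, cc j * y j * Real.log (x t j) with hV
  set g : ℝ → ℝ := fun t => V t + C * t with hg
  set S : ℝ → ℝ := fun t => ∑ j, cc j * y j * (physQ B bb cc (x t) j / x t j) with hS
  -- derivative of g within s
  have hderivg : ∀ t ∈ s, HasDerivWithinAt g (S t) s t := by
    intro t ht
    have hx' := (hsol t ht).2
    have hVd : HasDerivWithinAt V
        (∑ j, cc j * y j * ((physQ B bb cc (x t) - x t) j / x t j)) s t := by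
      apply HasDerivWithinAt.fun_sum
      intro j _
      exact ((hasDerivWithinAt_pi.mp hx' j).log (hpos t ht j).ne').const_mul _
    have hCd : HasDerivWithinAt (fun u => C * u) C s t := by
      simpa using (hasDerivWithinAt_id t s).const_mul C
    have := hVd.add hCd
    refine this.congr_deriv ?_
    rw [hS, hC]
    rw [← Finset.sum_add_distrib]
    apply Finset.sum_congr rfl
    intro j _
    have hxj : x t j ≠ 0 := (hpos t ht j).ne'
    simp only [Pi.sub_apply]
    field_simp
    ring
  -- g is monotone on s
  have hmono : MonotoneOn g s := by
    apply monotoneOn_of_hasDerivWithinAt_nonneg (convex_Ico 0 T)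
    · intro t ht
      exact (hderivg t ht).continuousWithinAt
    · intro t ht
      rw [interior_Ico] at ht ⊢
      exact (hderivg t (Set.Ioo_subset_Ico_self ht)).mono Set.Ioo_subset_Ico_self
    · intro t ht
      rw [interior_Ico] at ht
      exact key B bb cc (x t) y hccpos (hpos t (Set.Ioo_subset_Ico_self ht)) hyb
  have h0s : (0:ℝ) ∈ s := ⟨le_refl 0, hT⟩
  -- lower bound on V t
  have hVlb : ∀ t ∈ s, V 0 - C * T ≤ V t := by
    intro t ht
    have h1 : g 0 ≤ g t := hmono h0s ht ht.1
    have h2 : C * t ≤ C * T := mul_le_mul_of_nonneg_left ht.2.le hC0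
    simp only [hg, mul_zero, add_zero] at h1
    linarith
  intro i hyi
  set K := V 0 - C * T - C * Real.log M with hK
  have hKb : ∀ t ∈ s, K ≤ cc i * y i * Real.log (x t i) := by
    intro t ht
    have hrest : ∑ j ∈ Finset.univ.erase i, cc j * y j * Real.log (x t j) ≤ C * Real.log M := by
      have hstep : ∀ j ∈ Finset.univ.erase i, cc j * y j * Real.log (x t j)
          ≤ cc j * y j * Real.log M := by
        intro j _
        exact mul_le_mul_of_nonneg_left
          (Real.log_le_log (hpos t ht j) (hMb t ht j))
          (mul_nonneg (hccpos j).le (hy j))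
      calc ∑ j ∈ Finset.univ.erase i, cc j * y j * Real.log (x t j)
          ≤ ∑ j ∈ Finset.univ.erase i, cc j * y j * Real.log M :=
            Finset.sum_le_sum hstep
        _ ≤ ∑ j, cc j * y j * Real.log M := by
            apply Finset.sum_le_sum_of_subset_of_nonneg (Finset.erase_subset _ _)
            intro j _ _
            exact mul_nonneg (mul_nonneg (hccpos j).le (hy j)) (Real.log_nonneg hM1)
        _ = C * Real.log M := by rw [hC, Finset.sum_mul]
    have hVsplit : V t = cc i * y i * Real.log (x t i)
        + ∑ j ∈ Finset.univ.erase i, cc j * y j * Real.log (x t j) := by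
      rw [hV]
      exact (Finset.add_sum_erase _ _ (Finset.mem_univ i)).symm
    have := hVlb t ht
    rw [hVsplit] at this
    rw [hK]
    linarith
  have hcy : 0 < cc i * y i := mul_pos (hccpos i) hyi
  set ε := Real.exp (K / (cc i * y i)) with hε
  have hεpos : 0 < ε := Real.exp_pos _
  have hxlb : ∀ t ∈ s, ε ≤ x t i := by
    intro t ht
    have h1 : K / (cc i * y i) ≤ Real.log (x t i) := by
      rw [div_le_iff₀ hcy] at *
      have := hKb t ht
      linarith [mul_comm (Real.log (x t i)) (cc i * y i)]
    calc ε ≤ Real.exp (Real.log (x t i)) := Real.exp_le_exp.mpr h1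
      _ = x t i := Real.exp_log (hpos t ht i)
  -- pass to the limit
  have hne : (𝓝[s] T).NeBot := by
    rw [← mem_closure_iff_nhdsWithin_neBot, hs, closure_Ico hT.ne]
    exact ⟨hT.le, le_refl T⟩
  have hlimi : Filter.Tendsto (fun t => x t i) (𝓝[s] T) (𝓝 (xT i)) :=
    ((continuous_apply i).tendsto xT).comp hlim
  have : ε ≤ xT i := by
    apply ge_of_tendsto hlimi
    filter_upwards [eventually_mem_nhdsWithin] with u hu
    exact hxlb u hu
  linarith
end

section
/- Let x⋆ be an optimal solution of the linear program min{cᵀx : A x = b, x ≥ 0}, and let v be a vertex of the feasible region P = {x : A x = b, x ≥ 0} with cᵀv ≠ cᵀx⋆. Then cᵀv − cᵀx⋆ ≥ 𝒟⁻², where 𝒟 = max{|det A'| : A' is a square submatrix of A}. -/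
set_option maxHeartbeats 1000000


open Matrix Filter Set Topology

lemma exists_invertible_submatrix {m k : ℕ} (B : Matrix (Fin m) (Fin k) ℝ)
    (h : LinearIndependent ℝ (fun s => Bᵀ s)) :
    ∃ f : Fin k → Fin m, Function.Injective f ∧ IsUnit (B.submatrix f id) := by
  classical
  have hrkT : Bᵀ.rank = k := by
    exact h.rank_matrix.trans (Fintype.card_fin k)
  have hrk : Module.finrank ℝ (Submodule.span ℝ (Set.range B)) = k := by
    exact (Matrix.rank_eq_finrank_span_row B).symm.trans (by rw [← Matrix.rank_transpose, hrkT])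
  obtain ⟨bs, hsub, hspan, hind⟩ := exists_linearIndependent ℝ (Set.range B)
  have hbfin : bs.Finite := (Set.finite_range B).subset hsub
  haveI : Fintype bs := hbfin.fintype
  have hcard : Fintype.card bs = k := by
    have := finrank_span_set_eq_card hind
    rw [hspan, hrk] at this
    rw [Set.toFinset_card] at this
    omega
  let e : Fin k ≃ bs := (Fintype.equivFinOfCardEq hcard).symm
  have hchoice : ∀ s : Fin k, ∃ i, B i = (e s : Fin k → ℝ) := fun s => hsub (e s).2
  choose f hf using hchoice
  have hrows : (fun s => (B.submatrix f id) s) = fun s => ((e s : Fin k → ℝ)) := by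
    funext s
    exact hf s
  refine ⟨f, ?_, ?_⟩
  · intro s s' hss
    have : (e s : Fin k → ℝ) = (e s' : Fin k → ℝ) := by rw [← hf s, ← hf s', hss]
    exact e.injective (Subtype.ext this)
  · rw [← Matrix.linearIndependent_rows_iff_isUnit]; show LinearIndependent ℝ (fun s => (B.submatrix f id) s); rw [hrows]
    exact hind.comp e e.injective

lemma extremePoint_denom {m n : ℕ} (A : Matrix (Fin m) (Fin n) ℤ) (b : Fin m → ℤ)
    (v : Fin n → ℝ)
    (hv : v ∈ Set.extremePoints ℝ
      {x : Fin n → ℝ | (rmat A *ᵥ x = fun j => (b j : ℝ)) ∧ ∀ i, 0 ≤ x i}) :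
    ∃ q ∈ subdets A, 0 < q ∧ ∃ z : Fin n → ℤ, ∀ i, q * v i = (z i : ℝ) := by
  classical
  obtain ⟨⟨hAv, hv0⟩, hext⟩ := hv
  set S : Finset (Fin n) := Finset.univ.filter (fun i => v i ≠ 0) with hS
  set k := S.card with hk
  set g : Fin k → Fin n := fun s => ((S.orderIsoOfFin rfl) s : Fin n) with hg
  have hginj : Function.Injective g := fun a b hab =>
    (S.orderIsoOfFin rfl).injective (Subtype.ext hab)
  have hgmem : ∀ s, g s ∈ S := fun s => (S.orderIsoOfFin rfl s).2
  have hSpos : ∀ i ∈ S, 0 < v i := by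
    intro i hi
    have : v i ≠ 0 := (Finset.mem_filter.mp hi).2
    exact lt_of_le_of_ne (hv0 i) (Ne.symm this)
  have hvS : ∀ i, i ∉ S → v i = 0 := by
    intro i hi
    by_contra h
    exact hi (Finset.mem_filter.mpr ⟨Finset.mem_univ i, h⟩)
  -- reindexing sums over S
  have hsumS : ∀ (F : Fin n → ℝ), ∑ s : Fin k, F (g s) = ∑ j ∈ S, F j := by
    intro F
    rw [← Finset.sum_coe_sort S F]
    exact Equiv.sum_comp (S.orderIsoOfFin rfl).toEquiv (fun j : S => F ↑j)
  set B : Matrix (Fin m) (Fin k) ℝ := (rmat A).submatrix id g with hB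
  have hindep : LinearIndependent ℝ (fun s => Bᵀ s) := by
    by_contra hdep
    obtain ⟨y, hy0, s₀, hs₀⟩ := Fintype.not_linearIndependent_iff.mp hdep
    set y' : Fin n → ℝ :=
      fun j => if h : j ∈ S then y ((S.orderIsoOfFin rfl).symm ⟨j, h⟩) else 0 with hy'
    have hy'g : ∀ s, y' (g s) = y s := by
      intro s
      have h1 : g s ∈ S := hgmem s
      simp only [hy', dif_pos h1]
      congr 1
      have h2 : (⟨g s, h1⟩ : {x // x ∈ S}) = (S.orderIsoOfFin rfl) s := Subtype.coe_eta _ _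
      rw [h2, OrderIso.symm_apply_apply]
    have hy'0 : ∀ j, j ∉ S → y' j = 0 := by
      intro j hj; simp only [hy', dif_neg hj]
    have hAy' : rmat A *ᵥ y' = 0 := by
      funext r
      show ∑ j, rmat A r j * y' j = 0
      rw [← Finset.sum_subset (Finset.subset_univ S)
        (fun j _ hj => by rw [hy'0 j hj, mul_zero])]
      rw [← hsumS (fun j => rmat A r j * y' j)]
      have := congrFun hy0 r
      simp only [Finset.sum_apply, Pi.smul_apply, Pi.zero_apply, smul_eq_mul] at this
      rw [← this]
      apply Finset.sum_congr rfl
      intro s _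
      rw [hy'g s]
      show rmat A r (g s) * y s = y s * Bᵀ s r
      rw [hB]
      simp [Matrix.transpose_apply, Matrix.submatrix_apply, mul_comm]
    -- choose ε
    have hSne : S.Nonempty := ⟨g s₀, hgmem s₀⟩
    set δ : ℝ := S.inf' hSne v with hδ
    have hδpos : 0 < δ := by
      rw [hδ, Finset.lt_inf'_iff]
      exact fun i hi => hSpos i hi
    set M : ℝ := (∑ i, |y' i|) + 1 with hM
    have hMpos : 0 < M := by
      have : (0:ℝ) ≤ ∑ i, |y' i| := Finset.sum_nonneg fun i _ => abs_nonneg _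
      linarith
    have hyM : ∀ i, |y' i| ≤ M := by
      intro i
      have h1 : |y' i| ≤ ∑ j, |y' j| :=
        Finset.single_le_sum (fun j _ => abs_nonneg (y' j)) (Finset.mem_univ i)
      linarith
    set ε : ℝ := δ / M with hε
    have hεpos : 0 < ε := div_pos hδpos hMpos
    have hbound : ∀ i, ε * |y' i| ≤ δ := by
      intro i
      calc ε * |y' i| ≤ ε * M := by
            exact mul_le_mul_of_nonneg_left (hyM i) (le_of_lt hεpos)
        _ = δ := by rw [hε, div_mul_cancel₀ _ (ne_of_gt hMpos)]
    have hmem : ∀ σ : ℝ, σ = 1 ∨ σ = -1 →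
        (v + (σ * ε) • y') ∈ {x : Fin n → ℝ | (rmat A *ᵥ x = fun j => (b j : ℝ)) ∧ ∀ i, 0 ≤ x i} := by
      intro σ hσ
      constructor
      · rw [Matrix.mulVec_add, Matrix.mulVec_smul, hAy', smul_zero, add_zero, hAv]
      · intro i
        by_cases hi : i ∈ S
        · have h1 : δ ≤ v i := Finset.inf'_le v hi
          have h2 : |σ * ε * y' i| ≤ δ := by
            have : |σ| = 1 := by rcases hσ with h | h <;> simp [h]
            rw [abs_mul, abs_mul, this, one_mul, abs_of_pos hεpos]
            exact hbound i
          have h3 : -(δ) ≤ σ * ε * y' i := by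
            have := neg_abs_le (σ * ε * y' i)
            linarith
          simp only [Pi.add_apply, Pi.smul_apply, smul_eq_mul]
          linarith
        · simp only [Pi.add_apply, Pi.smul_apply, smul_eq_mul, hy'0 i hi, mul_zero, add_zero]
          exact hv0 i
    have hm1 := hmem 1 (Or.inl rfl)
    have hm2 := hmem (-1) (Or.inr rfl)
    have hseg : v ∈ openSegment ℝ (v + (1 * ε) • y') (v + ((-1) * ε) • y') := by
      refine ⟨1/2, 1/2, by norm_num, by norm_num, by norm_num, ?_⟩
      funext i
      simp only [Pi.add_apply, Pi.smul_apply, smul_eq_mul]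
      ring
    have heq := hext hm1 hm2 hseg
    have : (1 * ε) • y' = 0 := by
      have := congrArg (fun w => w - v) heq
      simpa using this
    have hy'z : y' = 0 := by
      have hne : (1 : ℝ) * ε ≠ 0 := by
        simpa using ne_of_gt hεpos
      exact (smul_eq_zero.mp this).resolve_left hne
    have : y s₀ = 0 := by rw [← hy'g s₀, hy'z]; rfl
    exact hs₀ this
  obtain ⟨f, hfinj, hfunit⟩ := exists_invertible_submatrix B hindep
  set M0 : Matrix (Fin k) (Fin k) ℝ := B.submatrix f id with hM0
  have hM0A : M0 = rmat (A.submatrix f g) := by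
    rw [hM0, hB, rmat, rmat]
    ext r s
    simp [Matrix.submatrix_apply]
  set D : ℤ := (A.submatrix f g).det with hD
  have hdetM0 : M0.det = (D : ℝ) := by
    rw [hM0A]
    have h1 : rmat (A.submatrix f g) = (Int.castRingHom ℝ).mapMatrix (A.submatrix f g) := rfl
    rw [h1, ← RingHom.map_det]
    rfl
  have hDne : D ≠ 0 := by
    intro h
    have hdet : IsUnit M0.det := (Matrix.isUnit_iff_isUnit_det M0).mp hfunit
    rw [hdetM0, h] at hdet
    simp at hdet
  set q : ℝ := |((D : ℝ))| with hq
  have hqsub : q ∈ subdets A := ⟨k, f, g, hfinj, hginj, by rw [hq, hD]⟩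
  have hqpos : 0 < q := by
    rw [hq]
    exact abs_pos.mpr (by exact_mod_cast hDne)
  -- Cramer
  have hMv : M0 *ᵥ (fun s => v (g s)) = fun r => (b (f r) : ℝ) := by
    funext r
    show ∑ s : Fin k, M0 r s * v (g s) = (b (f r) : ℝ)
    have h1 : ∀ s, M0 r s = rmat A (f r) (g s) := by
      intro s; rw [hM0, hB]; simp [Matrix.submatrix_apply]
    calc ∑ s : Fin k, M0 r s * v (g s) = ∑ s : Fin k, rmat A (f r) (g s) * v (g s) := by
          apply Finset.sum_congr rfl; intro s _; rw [h1]
      _ = ∑ j ∈ S, rmat A (f r) j * v j := hsumS (fun j => rmat A (f r) j * v j)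
      _ = ∑ j, rmat A (f r) j * v j := Finset.sum_subset (Finset.subset_univ S)
          (fun j _ hj => by rw [hvS j hj, mul_zero])
      _ = (rmat A *ᵥ v) (f r) := rfl
      _ = (b (f r) : ℝ) := by rw [hAv]
  have hcram : ∀ s, (D : ℝ) * v (g s) =
      (((A.submatrix f g).adjugate *ᵥ (fun r => b (f r)) : Fin k → ℤ) s : ℝ) := by
    intro s
    have h1 : M0.adjugate *ᵥ (M0 *ᵥ (fun s => v (g s))) = M0.det • (fun s => v (g s)) := by
      rw [Matrix.mulVec_mulVec, Matrix.adjugate_mul, Matrix.smul_mulVec,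
        Matrix.one_mulVec]
    rw [hMv] at h1
    have h2 := congrFun h1 s
    have hadj : M0.adjugate = ((A.submatrix f g).adjugate).map (Int.cast : ℤ → ℝ) := by
      rw [hM0A]
      have h0 : rmat (A.submatrix f g) = (Int.castRingHom ℝ).mapMatrix (A.submatrix f g) := rfl
      rw [h0, ← RingHom.map_adjugate]
      rfl
    have h3 : (M0.adjugate *ᵥ fun r => (b (f r) : ℝ)) s =
        (((A.submatrix f g).adjugate *ᵥ (fun r => b (f r)) : Fin k → ℤ) s : ℝ) := by
      rw [hadj]
      simp only [Matrix.mulVec, dotProduct, Matrix.map_apply]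
      push_cast
      rfl
    rw [h3] at h2
    rw [h2]
    simp only [Pi.smul_apply, smul_eq_mul, hdetM0]
  -- assemble z
  have hzi : ∀ i, ∃ zi : ℤ, q * v i = (zi : ℝ) := by
    intro i
    by_cases hi : i ∈ S
    · set s : Fin k := (S.orderIsoOfFin rfl).symm ⟨i, hi⟩ with hs
      have hgs : g s = i := by
        rw [hg, hs]
        simp
      rcases abs_choice (D : ℝ) with h | h
      · refine ⟨((A.submatrix f g).adjugate *ᵥ (fun r => b (f r))) s, ?_⟩
        rw [hq, h, ← hgs]
        exact hcram s
      · refine ⟨-(((A.submatrix f g).adjugate *ᵥ (fun r => b (f r))) s), ?_⟩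
        rw [hq, h, ← hgs]
        push_cast
        rw [neg_mul, hcram s]
    · exact ⟨0, by rw [hvS i hi, mul_zero]; simp⟩
  choose z hz using hzi
  exact ⟨q, hqsub, hqpos, z, hz⟩

theorem nonoptimal_vertex_cost_gap {m n : ℕ} (A : Matrix (Fin m) (Fin n) ℤ)
    (hrank : (rmat A).rank = m)
    (b : Fin m → ℤ) (c : Fin n → ℤ) (hc : ∀ i, 0 < c i)
    (𝒟 : ℝ) (hD : IsGreatest (subdets A) 𝒟)
    (xstar : Fin n → ℝ)
    (hxs : (rmat A *ᵥ xstar = fun j => (b j : ℝ)) ∧ ∀ i, 0 ≤ xstar i)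
    (hopt : ∀ z : Fin n → ℝ, (rmat A *ᵥ z = fun j => (b j : ℝ)) → (∀ i, 0 ≤ z i) →
      (fun i => (c i : ℝ)) ⬝ᵥ xstar ≤ (fun i => (c i : ℝ)) ⬝ᵥ z)
    (v : Fin n → ℝ)
    (hv : v ∈ Set.extremePoints ℝ
      {x : Fin n → ℝ | (rmat A *ᵥ x = fun j => (b j : ℝ)) ∧ ∀ i, 0 ≤ x i})
    (hne : (fun i => (c i : ℝ)) ⬝ᵥ v ≠ (fun i => (c i : ℝ)) ⬝ᵥ xstar) :
    (𝒟 ^ 2)⁻¹ ≤ (fun i => (c i : ℝ)) ⬝ᵥ v - (fun i => (c i : ℝ)) ⬝ᵥ xstar := by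
  classical
  set c' : Fin n → ℝ := fun i => (c i : ℝ) with hc'
  have hcpos : ∀ i, (0:ℝ) < c' i := fun i => by
    have h0 : (0:ℝ) < (c i : ℝ) := by exact_mod_cast hc i
    simpa [hc'] using h0
  set P : Set (Fin n → ℝ) :=
    {x : Fin n → ℝ | (rmat A *ᵥ x = fun j => (b j : ℝ)) ∧ ∀ i, 0 ≤ x i} with hP
  set Pstar : Set (Fin n → ℝ) := {x | x ∈ P ∧ c' ⬝ᵥ x = c' ⬝ᵥ xstar} with hPs
  have hxsP : xstar ∈ P := hxs
  have hPsne : Pstar.Nonempty := ⟨xstar, hxsP, rfl⟩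
  have hPclosed : IsClosed P := by
    have h1 : Continuous fun x : Fin n → ℝ => rmat A *ᵥ x :=
      (rmat A).mulVecLin.continuous_of_finiteDimensional
    have h2 : IsClosed {x : Fin n → ℝ | rmat A *ᵥ x = fun j => (b j : ℝ)} :=
      isClosed_eq h1 continuous_const
    have h3 : IsClosed {x : Fin n → ℝ | ∀ i, 0 ≤ x i} := by
      have he : {x : Fin n → ℝ | ∀ i, 0 ≤ x i} = ⋂ i, {x : Fin n → ℝ | 0 ≤ x i} := by
        ext x; simp
      rw [he]
      exact isClosed_iInter fun i => isClosed_le continuous_const (continuous_apply i)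
    exact h2.inter h3
  have hdotcont : Continuous fun x : Fin n → ℝ => c' ⬝ᵥ x := by
    simp only [dotProduct]
    exact continuous_finset_sum _ fun i _ => continuous_const.mul (continuous_apply i)
  have hPscl : IsClosed Pstar :=
    hPclosed.inter (isClosed_eq hdotcont continuous_const)
  have hPsub : Pstar ⊆ Set.pi Set.univ
      (fun i => Set.Icc (0:ℝ) ((c' ⬝ᵥ xstar) / (c' i))) := by
    rintro x ⟨⟨hxA, hx0⟩, hxc⟩ i -
    refine ⟨hx0 i, ?_⟩
    have hsum : c' i * x i ≤ c' ⬝ᵥ x :=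
      Finset.single_le_sum (f := fun j => c' j * x j)
        (fun j _ => mul_nonneg (le_of_lt (hcpos j)) (hx0 j)) (Finset.mem_univ i)
    rw [hxc] at hsum
    rw [le_div_iff₀ (hcpos i)]
    linarith
  have hcomp : IsCompact Pstar :=
    IsCompact.of_isClosed_subset (isCompact_univ_pi fun i => isCompact_Icc) hPscl hPsub
  obtain ⟨w, hwPext⟩ := hcomp.extremePoints_nonempty hPsne
  have hwPs : w ∈ Pstar := hwPext.1
  -- Pstar is an exposed face of P
  have hexp : IsExposed ℝ P Pstar := by
    intro _
    refine ⟨LinearMap.toContinuousLinearMap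
      { toFun := fun x => -(c' ⬝ᵥ x)
        map_add' := fun x y => by
          show -(c' ⬝ᵥ (x + y)) = -(c' ⬝ᵥ x) + -(c' ⬝ᵥ y)
          rw [dotProduct_add]; ring
        map_smul' := fun a x => by
          show -(c' ⬝ᵥ (a • x)) = a * -(c' ⬝ᵥ x)
          rw [dotProduct_smul]
          simp only [smul_eq_mul]
          ring }, ?_⟩
    ext x
    simp only [hPs, Set.mem_setOf_eq, LinearMap.coe_toContinuousLinearMap',
      LinearMap.coe_mk, AddHom.coe_mk]
    constructor
    · rintro ⟨hxP, hxc⟩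
      refine ⟨hxP, fun y hyP => ?_⟩
      have := hopt y hyP.1 hyP.2
      rw [hxc]
      linarith
    · rintro ⟨hxP, hmax⟩
      refine ⟨hxP, ?_⟩
      have h1 := hmax xstar hxsP
      have h2 := hopt x hxP.1 hxP.2
      linarith
  have hwP : w ∈ Set.extremePoints ℝ P :=
    (hexp.isExtreme).extremePoints_subset_extremePoints hwPext
  have hwc : c' ⬝ᵥ w = c' ⬝ᵥ xstar := hwPs.2
  -- denominators
  obtain ⟨q₁, hq₁sub, hq₁pos, z₁, hz₁⟩ := extremePoint_denom A b v hv
  obtain ⟨q₂, hq₂sub, hq₂pos, z₂, hz₂⟩ := extremePoint_denom A b w hwP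
  have hint : ∀ q ∈ subdets A, ∃ Q : ℤ, q = (Q : ℝ) := by
    rintro q ⟨k, f, g, -, -, rfl⟩
    exact ⟨|((A.submatrix f g)).det|, by push_cast; rfl⟩
  obtain ⟨Q₁, hQ₁⟩ := hint q₁ hq₁sub
  obtain ⟨Q₂, hQ₂⟩ := hint q₂ hq₂sub
  have h1D : (1:ℝ) ≤ 𝒟 := by
    refine hD.2 ⟨0, Fin.elim0, Fin.elim0, fun a => a.elim0, fun a => a.elim0, ?_⟩
    simp
  have hq₁D : q₁ ≤ 𝒟 := hD.2 hq₁sub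
  have hq₂D : q₂ ≤ 𝒟 := hD.2 hq₂sub
  have h𝒟pos : (0:ℝ) < 𝒟 := lt_of_lt_of_le one_pos h1D
  -- integrality of scaled costs
  have hN : ∀ (q : ℝ) (z u : Fin n → ℝ) (zz : Fin n → ℤ), (∀ i, q * u i = (zz i : ℝ)) →
      q * (c' ⬝ᵥ u) = ((∑ i, c i * zz i : ℤ) : ℝ) := by
    intro q z u zz hzz
    simp only [dotProduct]
    rw [Finset.mul_sum]
    push_cast
    refine Finset.sum_congr rfl fun i _ => ?_
    calc q * (c' i * u i) = c' i * (q * u i) := by ring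
      _ = (c i : ℝ) * (zz i : ℝ) := by rw [hzz i, hc']
  have hN₁ := hN q₁ v v z₁ hz₁
  have hN₂ := hN q₂ w w z₂ hz₂
  set N₁ : ℤ := ∑ i, c i * z₁ i with hNd₁
  set N₂ : ℤ := ∑ i, c i * z₂ i with hNd₂
  have hvP : v ∈ P := hv.1
  have hle : c' ⬝ᵥ xstar ≤ c' ⬝ᵥ v := hopt v hvP.1 hvP.2
  have hgap : 0 < c' ⬝ᵥ v - c' ⬝ᵥ xstar := sub_pos.mpr (lt_of_le_of_ne hle (Ne.symm hne))
  have hval : q₁ * q₂ * (c' ⬝ᵥ v - c' ⬝ᵥ xstar) = ((Q₂ * N₁ - Q₁ * N₂ : ℤ) : ℝ) := by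
    rw [← hwc]
    calc q₁ * q₂ * (c' ⬝ᵥ v - c' ⬝ᵥ w)
        = q₂ * (q₁ * (c' ⬝ᵥ v)) - q₁ * (q₂ * (c' ⬝ᵥ w)) := by ring
      _ = (Q₂:ℝ) * (N₁:ℝ) - (Q₁:ℝ) * (N₂:ℝ) := by rw [hN₁, hN₂, hQ₁, hQ₂]
      _ = ((Q₂ * N₁ - Q₁ * N₂ : ℤ) : ℝ) := by push_cast; ring
  have hKey : (1:ℝ) ≤ q₁ * q₂ * (c' ⬝ᵥ v - c' ⬝ᵥ xstar) := by
    have hpos : (0:ℝ) < ((Q₂ * N₁ - Q₁ * N₂ : ℤ) : ℝ) := by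
      rw [← hval]
      positivity
    have hz : (0:ℤ) < Q₂ * N₁ - Q₁ * N₂ := by exact_mod_cast hpos
    have hone : (1:ℤ) ≤ Q₂ * N₁ - Q₁ * N₂ := hz
    rw [hval]
    exact_mod_cast hone
  have hq12 : q₁ * q₂ ≤ 𝒟 * 𝒟 :=
    mul_le_mul hq₁D hq₂D (le_of_lt hq₂pos) (le_of_lt h𝒟pos)
  rw [inv_eq_one_div, div_le_iff₀ (by positivity)]
  nlinarith [hKey, hgap, hq12, hq₁pos, hq₂pos]
end

section
/- Suppose x : [0,∞) → ℝⁿ_{>0} is a solution of the Physarum dynamics ẋ = q − x, and let p(t) denote the solution of (A W(t) Aᵀ) p(t) = b where W(t) = diag(x₁(t)/c₁,…,xₙ(t)/cₙ). Then ‖Aᵀ p(t)‖_∞ is uniformly bounded over t ∈ [0,∞), i.e., there exists a constant M (depending only on A, b, c, and x(0)) such that ‖Aᵀ p(t)‖_∞ ≤ M for all t ≥ 0. -/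
open Matrix Filter Set Topology

namespace PhysAux
variable {m n : ℕ}

/-- column `j` of `B` as a vector. -/
def colv (B : Matrix (Fin m) (Fin n) ℝ) (j : Fin n) : Fin m → ℝ := fun k => B k j

lemma rowL (B : Matrix (Fin m) (Fin n) ℝ) (u : Fin n → ℝ) (l : Fin m) :
    (B * Matrix.diagonal u * Bᵀ) l = ∑ j : Fin n, (u j * B l j) • colv B j := by
  funext s
  have h1 : B * Matrix.diagonal u = Matrix.of (fun l j => B l j * u j) := by
    ext l j; exact Matrix.mul_diagonal ..
  rw [h1]
  simp only [Matrix.mul_apply, Matrix.transpose_apply, Matrix.of_apply, Finset.sum_apply,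
    Pi.smul_apply, smul_eq_mul, colv]
  exact Finset.sum_congr rfl fun j _ => by ring

/-- coefficient of a function `r` in the expansion of `det (B * diagonal u * Bᵀ)`. -/
noncomputable def cf (B : Matrix (Fin m) (Fin n) ℝ) (r : Fin m → Fin n) : ℝ :=
  (∏ l, B l (r l)) * (Matrix.of fun l k => B k (r l)).det

lemma detL_expand (B : Matrix (Fin m) (Fin n) ℝ) (u : Fin n → ℝ) :
    (B * Matrix.diagonal u * Bᵀ).det
      = ∑ r : Fin m → Fin n, (∏ l, u (r l)) * cf B r := by
  have h0 : (B * Matrix.diagonal u * Bᵀ).det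
      = (Matrix.detRowAlternating : AlternatingMap ℝ (Fin m → ℝ) ℝ (Fin m))
          (fun l => ∑ j : Fin n, (u j * B l j) • colv B j) := by
    rw [show (fun l => ∑ j : Fin n, (u j * B l j) • colv B j)
        = (B * Matrix.diagonal u * Bᵀ) from (funext fun l => (rowL B u l).symm)]
    rfl
  rw [h0, ← AlternatingMap.coe_multilinearMap, MultilinearMap.map_sum]
  refine Finset.sum_congr rfl fun r _ => ?_
  rw [MultilinearMap.map_smul_univ]
  rw [Finset.prod_mul_distrib, smul_eq_mul, cf, mul_assoc]
  rfl

lemma cf_eq_zero (B : Matrix (Fin m) (Fin n) ℝ) (r : Fin m → Fin n)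
    (h : ¬ Function.Injective r) : cf B r = 0 := by
  simp only [Function.Injective, not_forall] at h
  obtain ⟨l1, l2, he, hne⟩ := h
  have : (Matrix.of fun l k => B k (r l)).det = 0 := by
    apply Matrix.det_zero_of_row_eq hne
    funext k; simp [he]
  simp [cf, this]

/-- Coefficients of the grouped expansion of `det (B * diagonal u * Bᵀ)` by subsets. -/
noncomputable def delta (B : Matrix (Fin m) (Fin n) ℝ) (S : Finset (Fin n)) : ℝ :=
  ∑ r ∈ Finset.univ.filter (fun r : Fin m → Fin n => Finset.univ.image r = S), cf B r

lemma detL_grouped (B : Matrix (Fin m) (Fin n) ℝ) (u : Fin n → ℝ) :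
    (B * Matrix.diagonal u * Bᵀ).det = ∑ S : Finset (Fin n), delta B S * ∏ j ∈ S, u j := by
  rw [detL_expand]
  rw [← Finset.sum_fiberwise (Finset.univ) (fun r : Fin m → Fin n => Finset.univ.image r)
    (fun r => (∏ l, u (r l)) * cf B r)]
  refine Finset.sum_congr rfl fun S _ => ?_
  rw [delta, Finset.sum_mul]
  refine Finset.sum_congr rfl fun r hr => ?_
  simp only [Finset.mem_filter] at hr
  by_cases hinj : Function.Injective r
  · have hP : ∏ j ∈ S, u j = ∏ l, u (r l) := by
      rw [← hr.2, Finset.prod_image (fun a _ b _ h => hinj h)]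
    rw [hP]; ring
  · rw [cf_eq_zero B r hinj]; ring

lemma delta_eq_zero (B : Matrix (Fin m) (Fin n) ℝ) (S : Finset (Fin n)) (h : S.card ≠ m) :
    delta B S = 0 := by
  apply Finset.sum_eq_zero; intro r hr; simp only [Finset.mem_filter] at hr
  apply cf_eq_zero
  intro hinj
  apply h
  rw [← hr.2, Finset.card_image_of_injective _ hinj, Finset.card_univ, Fintype.card_fin]

lemma prod_indicator (S S' : Finset (Fin n)) :
    (∏ j ∈ S', (if j ∈ S then (1:ℝ) else 0)) = if S' ⊆ S then 1 else 0 := by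
  by_cases h : S' ⊆ S
  · rw [if_pos h]; apply Finset.prod_eq_one; intro j hj; rw [if_pos (h hj)]
  · rw [if_neg h]
    obtain ⟨j, hj, hjn⟩ := Finset.not_subset.mp h
    exact Finset.prod_eq_zero hj (if_neg hjn)

lemma sum_helper {M : Type*} [AddCommMonoid M] (S : Finset (Fin n)) {k : ℕ} (h : S.card = k)
    (F : Fin n → M) : ∑ j ∈ S, F j = ∑ v : Fin k, F (S.orderEmbOfFin h v) := by
  rw [← Finset.sum_coe_sort S F, ← Equiv.sum_comp (S.orderIsoOfFin h).toEquiv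
    (fun j : ↥S => F (j : Fin n))]
  apply Finset.sum_congr rfl; intro v _
  simp [Finset.coe_orderIsoOfFin_apply]

lemma BdiagS (B : Matrix (Fin m) (Fin n) ℝ) (S : Finset (Fin n)) (h : S.card = m) :
    B * Matrix.diagonal (fun j => if j ∈ S then (1:ℝ) else 0) * Bᵀ
      = (B.submatrix id (S.orderEmbOfFin h)) * (B.submatrix id (S.orderEmbOfFin h))ᵀ := by
  have h1 : B * Matrix.diagonal (fun j => if j ∈ S then (1:ℝ) else 0)
      = Matrix.of (fun k j => if j ∈ S then B k j else 0) := by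
    ext k j; rw [Matrix.mul_diagonal]; simp only [Matrix.of_apply]; split <;> ring
  ext k l
  rw [h1]
  simp only [Matrix.mul_apply, Matrix.of_apply, Matrix.transpose_apply, Matrix.submatrix_apply,
    id_eq]
  rw [Finset.sum_congr rfl (fun j (_ : j ∈ Finset.univ) => by
    rw [show (if j ∈ S then B k j else 0) * B l j = if j ∈ S then B k j * B l j else 0 from by
      split <;> ring])]
  rw [Finset.sum_ite_mem, Finset.univ_inter, sum_helper S h (fun j => B k j * B l j)]

lemma delta_eval (B : Matrix (Fin m) (Fin n) ℝ) (S : Finset (Fin n)) (h : S.card = m) :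
    delta B S = ((B.submatrix id (S.orderEmbOfFin h)).det)^2 := by
  have h1 := detL_grouped B (fun j => if j ∈ S then (1:ℝ) else 0)
  rw [BdiagS B S h, Matrix.det_mul, Matrix.det_transpose, ← sq] at h1
  rw [h1]
  have h2 : ∀ S' : Finset (Fin n),
      delta B S' * (∏ j ∈ S', (if j ∈ S then (1:ℝ) else 0))
        = if S' ⊆ S then delta B S' else 0 := by
    intro S'; rw [prod_indicator]; split <;> ring
  rw [Finset.sum_congr rfl (fun S' _ => h2 S'), ← Finset.sum_filter]
  refine (Finset.sum_eq_single_of_mem S (by simp) ?_).symm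
  intro S' hS' hne
  apply delta_eq_zero
  intro hc
  exact hne (Finset.eq_of_subset_of_card_le (Finset.mem_filter.mp hS').2 (by rw [hc, h]))

lemma delta_nonneg (B : Matrix (Fin m) (Fin n) ℝ) (S : Finset (Fin n)) : 0 ≤ delta B S := by
  by_cases h : S.card = m
  · rw [delta_eval B S h]; positivity
  · rw [delta_eq_zero B S h]

/-- linear independence of the columns of `B` indexed by `S`, in coefficient form. -/
def IndepOn (B : Matrix (Fin m) (Fin n) ℝ) (S : Finset (Fin n)) : Prop :=
  ∀ g : Fin n → ℝ, ∑ j ∈ S, g j • colv B j = 0 → ∀ j ∈ S, g j = 0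

lemma det_ne_zero_of_indepOn (B : Matrix (Fin m) (Fin n) ℝ) (S : Finset (Fin n))
    (h : S.card = m) (hind : IndepOn B S) :
    (B.submatrix id (S.orderEmbOfFin h)).det ≠ 0 := by
  intro h0
  obtain ⟨v, hv, hv0⟩ := (Matrix.exists_mulVec_eq_zero_iff).mpr h0
  classical
  set e := S.orderEmbOfFin h with he
  set g : Fin n → ℝ := fun j => if hj : j ∈ S then v ((S.orderIsoOfFin h).symm ⟨j, hj⟩) else 0
    with hgdef
  have hge : ∀ l : Fin m, g (e l) = v l := by
    intro l
    have hmem : e l ∈ S := S.orderEmbOfFin_mem h l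
    have hsymm : (S.orderIsoOfFin h).symm ⟨e l, hmem⟩ = l := by
      rw [OrderIso.symm_apply_eq]
      exact Subtype.ext (by simp [Finset.coe_orderIsoOfFin_apply, he])
    rw [hgdef]
    simp only [hmem, dif_pos]
    rw [hsymm]
  have hsum : ∑ j ∈ S, g j • colv B j = 0 := by
    funext k
    rw [Finset.sum_apply, sum_helper S h (fun j => (g j • colv B j) k)]
    have : ∀ l : Fin m, (g (e l) • colv B (e l)) k = (B.submatrix id e) k l * v l := by
      intro l
      simp only [Pi.smul_apply, smul_eq_mul, colv, Matrix.submatrix_apply, id_eq, hge l]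
      ring
    rw [Finset.sum_congr rfl (fun l _ => this l)]
    have := congrFun hv0 k
    rw [Matrix.mulVec, dotProduct] at this
    simpa using this
  apply hv
  funext l
  have := hind g hsum (e l) (S.orderEmbOfFin_mem h l)
  rw [hge l] at this
  simpa using this

lemma delta_pos (B : Matrix (Fin m) (Fin n) ℝ) (S : Finset (Fin n)) (h : S.card = m)
    (hind : IndepOn B S) : 0 < delta B S := by
  rw [delta_eval B S h]
  exact pow_two_pos_of_ne_zero (det_ne_zero_of_indepOn B S h hind)

lemma indepOn_insert (B : Matrix (Fin m) (Fin n) ℝ) (T : Finset (Fin n)) (j : Fin n)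
    (hj : j ∉ T) (hT : IndepOn B T)
    (hb : colv B j ∉ Submodule.span ℝ (colv B '' (T : Set (Fin n)))) :
    IndepOn B (insert j T) := by
  intro g hg
  rw [Finset.sum_insert hj] at hg
  have hmem : ∑ j' ∈ T, g j' • colv B j' ∈ Submodule.span ℝ (colv B '' (T : Set (Fin n))) :=
    Submodule.sum_mem _ (fun j' hj' =>
      Submodule.smul_mem _ _ (Submodule.subset_span ⟨j', hj', rfl⟩))
  have hgj : g j = 0 := by
    by_contra hne
    apply hb
    have h1 : g j • colv B j = -∑ j' ∈ T, g j' • colv B j' := by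
      rw [eq_neg_iff_add_eq_zero]; exact hg
    have h2 : colv B j = (g j)⁻¹ • (g j • colv B j) := by
      rw [smul_smul, inv_mul_cancel₀ hne, one_smul]
    rw [h2, h1]
    exact Submodule.smul_mem _ _ (Submodule.neg_mem _ hmem)
  have hsum0 : ∑ j' ∈ T, g j' • colv B j' = 0 := by
    rw [hgj, zero_smul, zero_add] at hg; exact hg
  intro i hi
  rcases Finset.mem_insert.mp hi with h | h
  · rw [h]; exact hgj
  · exact hT g hsum0 i h

lemma detL_pos (B : Matrix (Fin m) (Fin n) ℝ) (hBB : (B * Bᵀ).det ≠ 0)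
    (u : Fin n → ℝ) (hu : ∀ j, 0 < u j) :
    0 < (B * Matrix.diagonal u * Bᵀ).det := by
  have h1 : (B * Bᵀ).det = ∑ S : Finset (Fin n), delta B S := by
    have h2 := detL_grouped B (fun _ => (1:ℝ))
    simp only [Finset.prod_const_one, mul_one] at h2
    rw [← h2]
    congr 2
    rw [Matrix.diagonal_one, Matrix.mul_one]
  rw [h1] at hBB
  obtain ⟨S₀, _, hS₀⟩ := Finset.exists_ne_zero_of_sum_ne_zero hBB
  have hS₀pos : 0 < delta B S₀ := lt_of_le_of_ne (delta_nonneg B S₀) (Ne.symm hS₀)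
  rw [detL_grouped]
  have hterm : 0 < delta B S₀ * ∏ j ∈ S₀, u j :=
    mul_pos hS₀pos (Finset.prod_pos fun j _ => hu j)
  refine lt_of_lt_of_le hterm ?_
  exact Finset.single_le_sum (f := fun S => delta B S * ∏ j ∈ S, u j)
    (fun S _ => mul_nonneg (delta_nonneg B S) (Finset.prod_nonneg fun j _ => (hu j).le))
    (Finset.mem_univ S₀)

/-- rows appearing in the numerator expansion. -/
def fam (B : Matrix (Fin m) (Fin n) ℝ) (bR : Fin m → ℝ) (k : Fin m) (r : Fin m → Fin n) :
    Fin m → Fin m → ℝ := fun l => if l = k then bR else colv B (r l)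

/-- good subsets. -/
def GoodT (B : Matrix (Fin m) (Fin n) ℝ) (bR : Fin m → ℝ) (T : Finset (Fin n)) : Prop :=
  T.card = m - 1 ∧ IndepOn B T ∧ bR ∉ Submodule.span ℝ (colv B '' (T : Set (Fin n)))

noncomputable def goods (B : Matrix (Fin m) (Fin n) ℝ) (bR : Fin m → ℝ) :
    Finset (Finset (Fin n)) :=
  @Finset.filter _ (fun T => GoodT B bR T) (Classical.decPred _) Finset.univ

lemma updRow_expand (B : Matrix (Fin m) (Fin n) ℝ) (bR : Fin m → ℝ) (u : Fin n → ℝ)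
    (k : Fin m) (j0 : Fin n) :
    ((B * Matrix.diagonal u * Bᵀ).updateRow k bR).det
      = ∑ r ∈ Fintype.piFinset
          (fun l : Fin m => if l = k then ({j0} : Finset (Fin n)) else Finset.univ),
          (∏ l ∈ Finset.univ.erase k, (u (r l) * B l (r l))) * (Matrix.of (fam B bR k r)).det := by
  classical
  set A : Fin m → Finset (Fin n) :=
    fun l => if l = k then ({j0} : Finset (Fin n)) else Finset.univ with hA
  set g : ∀ _ : Fin m, Fin n → (Fin m → ℝ) :=
    fun l j => if l = k then bR else (u j * B l j) • colv B j with hg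
  have hrow : ((B * Matrix.diagonal u * Bᵀ).updateRow k bR)
      = fun l => ∑ j ∈ A l, g l j := by
    funext l
    by_cases hl : l = k
    · subst hl
      rw [Matrix.updateRow_self, hA, hg]
      simp
    · rw [Matrix.updateRow_ne hl, hA, hg]
      simp only [if_neg hl]
      rw [rowL B u l]
  have h0 : ((B * Matrix.diagonal u * Bᵀ).updateRow k bR).det
      = (Matrix.detRowAlternating : AlternatingMap ℝ (Fin m → ℝ) ℝ (Fin m))
          (fun l => ∑ j ∈ A l, g l j) := by rw [← hrow]; rfl
  rw [h0, ← AlternatingMap.coe_multilinearMap, MultilinearMap.map_sum_finset]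
  refine Finset.sum_congr rfl fun r hr => ?_
  have hterm : (fun l => g l (r l))
      = fun l => (if l = k then (1:ℝ) else u (r l) * B l (r l)) • fam B bR k r l := by
    funext l
    by_cases hl : l = k
    · subst hl; simp [hg, fam]
    · simp [hg, fam, if_neg hl]
  rw [hterm, MultilinearMap.map_smul_univ]
  have hprod : (∏ l, (if l = k then (1:ℝ) else u (r l) * B l (r l)))
      = ∏ l ∈ Finset.univ.erase k, (u (r l) * B l (r l)) := by
    rw [← Finset.mul_prod_erase Finset.univ _ (Finset.mem_univ k), if_pos rfl, one_mul]
    exact Finset.prod_congr rfl fun l hl => if_neg (Finset.ne_of_mem_erase hl)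
  rw [hprod, smul_eq_mul]
  rfl

lemma numer_bound (B : Matrix (Fin m) (Fin n) ℝ) (bR : Fin m → ℝ) (j0 : Fin n) :
    ∃ C : ℝ, 0 ≤ C ∧ ∀ u : Fin n → ℝ, (∀ j, 0 < u j) → ∀ k : Fin m,
      |((B * Matrix.diagonal u * Bᵀ).updateRow k bR).det|
        ≤ C * ∑ T ∈ goods B bR, ∏ j ∈ T, u j := by
  classical
  set c : Fin m → (Fin m → Fin n) → ℝ := fun k r =>
    (∏ l ∈ Finset.univ.erase k, |B l (r l)|) * |(Matrix.of (fam B bR k r)).det| with hc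
  have hcnn : ∀ k r, 0 ≤ c k r := fun k r =>
    mul_nonneg (Finset.prod_nonneg fun l _ => abs_nonneg _) (abs_nonneg _)
  refine ⟨∑ k : Fin m, ∑ r : Fin m → Fin n, c k r,
    Finset.sum_nonneg fun k _ => Finset.sum_nonneg fun r _ => hcnn k r, ?_⟩
  intro u hu k
  have hsumnn : (0:ℝ) ≤ ∑ T ∈ goods B bR, ∏ j ∈ T, u j :=
    Finset.sum_nonneg fun T _ => Finset.prod_nonneg fun j _ => (hu j).le
  rw [updRow_expand B bR u k j0]
  refine le_trans (Finset.abs_sum_le_sum_abs _ _) ?_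
  have hper : ∀ r ∈ Fintype.piFinset
      (fun l : Fin m => if l = k then ({j0} : Finset (Fin n)) else Finset.univ),
      |(∏ l ∈ Finset.univ.erase k, (u (r l) * B l (r l))) * (Matrix.of (fam B bR k r)).det|
        ≤ c k r * ∑ T ∈ goods B bR, ∏ j ∈ T, u j := by
    intro r _
    by_cases hdet : (Matrix.of (fam B bR k r)).det = 0
    · rw [hdet, mul_zero, abs_zero]
      exact mul_nonneg (hcnn k r) hsumnn
    · -- the family is linearly independent
      have hLI : LinearIndependent ℝ (fam B bR k r) := by
        by_contra hdep
        exact hdet (AlternatingMap.map_linearDependent Matrix.detRowAlternating _ hdep)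
      have hinj := hLI.injective
      have hInjOn : Set.InjOn r (Finset.univ.erase k : Finset (Fin m)) := by
        intro l1 hl1 l2 hl2 he
        have hl1' : l1 ≠ k := (Finset.mem_erase.mp (Finset.mem_coe.mp hl1)).1
        have hl2' : l2 ≠ k := (Finset.mem_erase.mp (Finset.mem_coe.mp hl2)).1
        apply hinj
        rw [show fam B bR k r l1 = colv B (r l1) from if_neg hl1',
          show fam B bR k r l2 = colv B (r l2) from if_neg hl2', he]
      set T : Finset (Fin n) := (Finset.univ.erase k).image r with hT
      have hTcard : T.card = m - 1 := by
        rw [hT, Finset.card_image_of_injOn hInjOn, Finset.card_erase_of_mem (Finset.mem_univ k),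
          Finset.card_univ, Fintype.card_fin]
      have hTindep : IndepOn B T := by
        intro gg hgg
        have hgg2 : ∑ l ∈ Finset.univ.erase k, gg (r l) • colv B (r l) = 0 := by
          rw [hT, Finset.sum_image (fun x hx y hy hxy => hInjOn hx hy hxy)] at hgg
          exact hgg
        have hsum2 : ∑ l : Fin m, (if l = k then 0 else gg (r l)) • fam B bR k r l = 0 := by
          rw [← Finset.add_sum_erase Finset.univ _ (Finset.mem_univ k), if_pos rfl, zero_smul,
            zero_add, Finset.sum_congr rfl (fun l hl => ?_), hgg2]
          have hlk : l ≠ k := (Finset.mem_erase.mp hl).1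
          rw [if_neg hlk, show fam B bR k r l = colv B (r l) from if_neg hlk]
        have hz := Fintype.linearIndependent_iff.mp hLI _ hsum2
        intro j hj
        obtain ⟨l, hl, rfl⟩ := Finset.mem_image.mp (hT ▸ hj)
        have hlk : l ≠ k := (Finset.mem_erase.mp hl).1
        have := hz l
        rwa [if_neg hlk] at this
      have hbR : bR ∉ Submodule.span ℝ (colv B '' (T : Set (Fin n))) := by
        have h1 := hLI.notMem_span_image (s := {l : Fin m | l ≠ k}) (x := k) (by simp)
        have h2 : fam B bR k r k = bR := if_pos rfl
        have h3 : fam B bR k r '' {l : Fin m | l ≠ k} = colv B '' (T : Set (Fin n)) := by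
          ext y
          constructor
          · rintro ⟨l, hl, rfl⟩
            have hlk : l ≠ k := hl
            exact ⟨r l, Finset.mem_coe.mpr (hT ▸ Finset.mem_image_of_mem r
              (Finset.mem_erase.mpr ⟨hlk, Finset.mem_univ l⟩)), (if_neg hlk).symm⟩
          · rintro ⟨j, hj, rfl⟩
            obtain ⟨l, hl, rfl⟩ := Finset.mem_image.mp (hT ▸ Finset.mem_coe.mp hj)
            have hlk : l ≠ k := (Finset.mem_erase.mp hl).1
            exact ⟨l, hlk, if_neg hlk⟩
        rw [h2, h3] at h1
        exact h1
      have hTgood : T ∈ goods B bR := by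
        rw [goods]
        exact Finset.mem_filter.mpr ⟨Finset.mem_univ T, hTcard, hTindep, hbR⟩
      have hprodim : ∏ l ∈ Finset.univ.erase k, u (r l) = ∏ j ∈ T, u j := by
        rw [hT, Finset.prod_image (fun x hx y hy hxy => hInjOn hx hy hxy)]
      have heq : |(∏ l ∈ Finset.univ.erase k, (u (r l) * B l (r l)))
          * (Matrix.of (fam B bR k r)).det|
          = (∏ j ∈ T, u j) * c k r := by
        rw [abs_mul, Finset.abs_prod,
          Finset.prod_congr rfl (fun l _ => abs_mul (u (r l)) (B l (r l))),
          Finset.prod_congr rfl (fun l (_ : l ∈ Finset.univ.erase k) => by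
            rw [abs_of_pos (hu (r l))]),
          Finset.prod_mul_distrib, hprodim, hc, mul_assoc]
      rw [heq]
      have h4 : (∏ j ∈ T, u j) ≤ ∑ T' ∈ goods B bR, ∏ j ∈ T', u j :=
        Finset.single_le_sum (f := fun T' => ∏ j ∈ T', u j)
          (fun T' _ => Finset.prod_nonneg fun j _ => (hu j).le) hTgood
      calc (∏ j ∈ T, u j) * c k r ≤ (∑ T' ∈ goods B bR, ∏ j ∈ T', u j) * c k r :=
            mul_le_mul_of_nonneg_right h4 (hcnn k r)
        _ = c k r * ∑ T' ∈ goods B bR, ∏ j ∈ T', u j := mul_comm _ _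
  refine le_trans (Finset.sum_le_sum hper) ?_
  rw [← Finset.sum_mul]
  refine mul_le_mul_of_nonneg_right ?_ hsumnn
  refine le_trans (Finset.sum_le_sum_of_subset_of_nonneg (Finset.subset_univ _)
    (fun r _ _ => hcnn k r)) ?_
  exact Finset.single_le_sum (f := fun k' => ∑ r : Fin m → Fin n, c k' r)
    (fun k' _ => Finset.sum_nonneg fun r _ => hcnn k' r) (Finset.mem_univ k)

lemma Lsymm (B : Matrix (Fin m) (Fin n) ℝ) (u : Fin n → ℝ) :
    (B * Matrix.diagonal u * Bᵀ)ᵀ = B * Matrix.diagonal u * Bᵀ := by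
  rw [Matrix.transpose_mul, Matrix.transpose_mul, Matrix.transpose_transpose,
    Matrix.diagonal_transpose, Matrix.mul_assoc]

lemma alg_bound (B : Matrix (Fin m) (Fin n) ℝ) (bR : Fin m → ℝ) (j0 : Fin n)
    (hBB : (B * Bᵀ).det ≠ 0) {ε : ℝ} (hε : 0 < ε) :
    ∃ M : ℝ, ∀ u : Fin n → ℝ, (∀ j, 0 < u j) →
      (∀ T ∈ goods B bR, ∃ j, j ∉ T ∧ ε ≤ u j ∧ 0 < delta B (insert j T)) →
      ∀ i : Fin n, |(Bᵀ *ᵥ ((B * Matrix.diagonal u * Bᵀ)⁻¹ *ᵥ bR)) i| ≤ M := by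
  classical
  obtain ⟨C, hC0, hC⟩ := numer_bound B bR j0
  set Q : Finset ℝ :=
    (Finset.univ.filter (fun S : Finset (Fin n) => 0 < delta B S)).image (delta B) with hQ
  set κ : ℝ := if h : Q.Nonempty then Q.min' h else 1 with hκ
  have hκpos : 0 < κ := by
    rw [hκ]
    split
    · next h =>
      obtain ⟨S, hS, hSe⟩ := Finset.mem_image.mp (Q.min'_mem h)
      rw [← hSe]
      exact (Finset.mem_filter.mp hS).2
    · exact one_pos
  have hκle : ∀ S : Finset (Fin n), 0 < delta B S → κ ≤ delta B S := by
    intro S hS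
    have hmem : delta B S ∈ Q :=
      Finset.mem_image_of_mem _ (Finset.mem_filter.mpr ⟨Finset.mem_univ S, hS⟩)
    rw [hκ, dif_pos ⟨_, hmem⟩]
    exact Q.min'_le _ hmem
  set SB : ℝ := ∑ i : Fin n, ∑ k : Fin m, |B k i| with hSB
  have hSB0 : 0 ≤ SB :=
    Finset.sum_nonneg fun i _ => Finset.sum_nonneg fun k _ => abs_nonneg _
  refine ⟨SB * C * (goods B bR).card / (κ * ε), ?_⟩
  intro u hu hdyn i
  set L := B * Matrix.diagonal u * Bᵀ with hL
  have hΔ : 0 < L.det := detL_pos B hBB u hu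
  set G : ℝ := ∑ T ∈ goods B bR, ∏ j ∈ T, u j with hG
  -- each good product is dominated by the determinant
  have key : ∀ T ∈ goods B bR, (∏ j ∈ T, u j) ≤ L.det / (κ * ε) := by
    intro T hT
    obtain ⟨j, hjT, hεu, hdel⟩ := hdyn T hT
    have h1 : delta B (insert j T) * ∏ j' ∈ insert j T, u j' ≤ L.det := by
      rw [hL, detL_grouped]
      exact Finset.single_le_sum (f := fun S => delta B S * ∏ j' ∈ S, u j')
        (fun S _ => mul_nonneg (delta_nonneg B S) (Finset.prod_nonneg fun j' _ => (hu j').le))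
        (Finset.mem_univ _)
    rw [Finset.prod_insert hjT] at h1
    have h2 : κ * ε * ∏ j' ∈ T, u j' ≤ delta B (insert j T) * (u j * ∏ j' ∈ T, u j') := by
      have := mul_le_mul (hκle _ hdel) hεu hε.le (delta_nonneg B _)
      have h3 : (0:ℝ) ≤ ∏ j' ∈ T, u j' := Finset.prod_nonneg fun j' _ => (hu j').le
      calc κ * ε * ∏ j' ∈ T, u j' ≤ delta B (insert j T) * u j * ∏ j' ∈ T, u j' :=
            mul_le_mul_of_nonneg_right this h3
        _ = delta B (insert j T) * (u j * ∏ j' ∈ T, u j') := by ring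
    have h4 := le_trans h2 h1
    rw [le_div_iff₀ (mul_pos hκpos hε)]
    calc (∏ j' ∈ T, u j') * (κ * ε) = κ * ε * ∏ j' ∈ T, u j' := by ring
      _ ≤ L.det := h4
  have hGle : G ≤ (goods B bR).card * (L.det / (κ * ε)) := by
    rw [hG]
    have := Finset.sum_le_card_nsmul (goods B bR) (fun T => ∏ j ∈ T, u j)
      (L.det / (κ * ε)) (fun T hT => key T hT)
    simpa [nsmul_eq_mul] using this
  -- rewrite the vector entry
  have hinv : L⁻¹ *ᵥ bR = (L.det)⁻¹ • (L.adjugate *ᵥ bR) := by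
    rw [Matrix.inv_def, Ring.inverse_eq_inv', Matrix.smul_mulVec]
  have hentry : (Bᵀ *ᵥ (L⁻¹ *ᵥ bR)) i
      = (L.det)⁻¹ * ∑ k : Fin m, B k i * (L.updateRow k bR).det := by
    rw [hinv, Matrix.mulVec_smul, Pi.smul_apply, smul_eq_mul]
    congr 1
    rw [← Matrix.cramer_eq_adjugate_mulVec]
    rw [Matrix.mulVec, dotProduct]
    refine Finset.sum_congr rfl fun k _ => ?_
    rw [Matrix.transpose_apply, Matrix.cramer_apply]
    congr 1
    have h5 : L.updateCol k bR = ((Lᵀ).updateRow k bR)ᵀ := by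
      rw [Matrix.updateRow_transpose, Matrix.transpose_transpose]
    rw [h5, Matrix.det_transpose, hL, Lsymm]
  rw [hentry, abs_mul, abs_of_pos (inv_pos.mpr hΔ)]
  have hnum : |∑ k : Fin m, B k i * (L.updateRow k bR).det| ≤ SB * (C * G) := by
    refine le_trans (Finset.abs_sum_le_sum_abs _ _) ?_
    have h6 : ∀ k : Fin m, |B k i * (L.updateRow k bR).det| ≤ |B k i| * (C * G) := by
      intro k
      rw [abs_mul]
      exact mul_le_mul_of_nonneg_left (hC u hu k) (abs_nonneg _)
    refine le_trans (Finset.sum_le_sum fun k _ => h6 k) ?_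
    rw [← Finset.sum_mul]
    refine mul_le_mul_of_nonneg_right ?_ ?_
    · exact Finset.single_le_sum (f := fun i' => ∑ k : Fin m, |B k i'|)
        (fun i' _ => Finset.sum_nonneg fun k _ => abs_nonneg _) (Finset.mem_univ i)
    · refine mul_nonneg hC0 ?_
      exact Finset.sum_nonneg fun T _ => Finset.prod_nonneg fun j _ => (hu j).le
  have hG2 : SB * (C * G) ≤ SB * (C * ((goods B bR).card * (L.det / (κ * ε)))) := by
    refine mul_le_mul_of_nonneg_left (mul_le_mul_of_nonneg_left hGle hC0) hSB0
  calc (L.det)⁻¹ * |∑ k : Fin m, B k i * (L.updateRow k bR).det|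
      ≤ (L.det)⁻¹ * (SB * (C * ((goods B bR).card * (L.det / (κ * ε))))) := by
        exact mul_le_mul_of_nonneg_left (le_trans hnum hG2) (inv_pos.mpr hΔ).le
    _ = SB * C * (goods B bR).card / (κ * ε) := by
        have hD : L.det ≠ 0 := hΔ.ne'
        have e : (L.det)⁻¹ * L.det = 1 := inv_mul_cancel₀ hD
        linear_combination (SB * C * (goods B bR).card / (κ * ε)) * e

lemma det_BBt_ne_zero (B : Matrix (Fin m) (Fin n) ℝ) (hrank : B.rank = m) :
    (B * Bᵀ).det ≠ 0 := by
  have h1 : (B * Bᵀ).rank = m := by rw [Matrix.rank_self_mul_transpose, hrank]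
  intro h0
  obtain ⟨v, hv, hv0⟩ := Matrix.exists_mulVec_eq_zero_iff.mpr h0
  have hsurj : Function.Surjective (B * Bᵀ).mulVecLin := by
    rw [← LinearMap.range_eq_top]
    apply Submodule.eq_top_of_finrank_eq
    rw [show Module.finrank ℝ (LinearMap.range (B * Bᵀ).mulVecLin) = (B * Bᵀ).rank from rfl, h1,
      Module.finrank_fintype_fun_eq_card, Fintype.card_fin]
  have hinj : Function.Injective (B * Bᵀ).mulVecLin :=
    (LinearMap.injective_iff_surjective_of_finrank_eq_finrank rfl).mpr hsurj
  apply hv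
  have : (B * Bᵀ).mulVecLin v = (B * Bᵀ).mulVecLin 0 := by
    rw [Matrix.mulVecLin_apply, Matrix.mulVecLin_apply, Matrix.mulVec_zero, hv0]
  exact hinj this

lemma mulVec_eq_sum_cols (B : Matrix (Fin m) (Fin n) ℝ) (v : Fin n → ℝ) :
    B *ᵥ v = ∑ j : Fin n, v j • colv B j := by
  funext k
  rw [Matrix.mulVec, dotProduct, Finset.sum_apply]
  exact Finset.sum_congr rfl fun j _ => by
    simp [colv, mul_comm]

lemma ode_exp {x : ℝ → Fin n → ℝ} {v : ℝ → Fin n → ℝ}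
    (hx : ∀ t ∈ Ici (0:ℝ), HasDerivWithinAt x (v t) (Ici 0) t)
    (F : (Fin n → ℝ) →ₗ[ℝ] ℝ) {β : ℝ}
    (hF : ∀ t ∈ Ici (0:ℝ), F (v t) = β - F (x t)) :
    ∀ t ∈ Ici (0:ℝ), F (x t) = β + (F (x 0) - β) * Real.exp (-t) := by
  set h : ℝ → ℝ := fun t => (F (x t) - β) * Real.exp t with hh
  have hd : ∀ t ∈ Ici (0:ℝ), HasDerivWithinAt h 0 (Ici 0) t := by
    intro t ht
    have h1 : HasDerivWithinAt (fun s => F (x s)) (F (v t)) (Ici 0) t := by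
      have := (F.toContinuousLinearMap.hasFDerivAt (x := x t)).comp_hasDerivWithinAt t (hx t ht)
      exact this
    have h2 : HasDerivWithinAt (fun s => F (x s) - β) (F (v t)) (Ici 0) t := h1.sub_const β
    have h3 : HasDerivWithinAt (fun s => Real.exp s) (Real.exp t) (Ici 0) t :=
      (Real.hasDerivAt_exp t).hasDerivWithinAt
    have h4 := h2.mul h3
    have h5 : F (v t) * Real.exp t + (F (x t) - β) * Real.exp t = 0 := by
      rw [hF t ht]; ring
    rw [hh]
    exact h4.congr_deriv h5
  intro t ht
  have ht' : (0:ℝ) ≤ t := ht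
  have hcont : ContinuousOn h (Icc 0 t) := fun s hs =>
    ((hd s (mem_Icc.mp hs).1).continuousWithinAt).mono Icc_subset_Ici_self
  have hconst := constant_of_has_deriv_right_zero hcont (fun s hs =>
    (hd s (mem_Ico.mp hs).1).mono (Ici_subset_Ici.mpr (mem_Ico.mp hs).1))
    t (mem_Icc.mpr ⟨ht', le_refl t⟩)
  rw [hh] at hconst
  simp only [Real.exp_zero, mul_one] at hconst
  have hexp : Real.exp t ≠ 0 := Real.exp_ne_zero t
  have : F (x t) - β = (F (x 0) - β) * Real.exp (-t) := by
    rw [Real.exp_neg]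
    field_simp
    linarith [hconst]
  linarith [this]

end PhysAux

set_option maxHeartbeats 1000000

theorem physarum_Atp_uniformly_bounded {m n : ℕ} (A : Matrix (Fin m) (Fin n) ℤ)
    (hrank : (rmat A).rank = m)
    (b : Fin m → ℤ) (c : Fin n → ℤ) (hc : ∀ i, 0 < c i)
    (hfeas : ∃ y : Fin n → ℝ, (rmat A *ᵥ y = fun j => (b j : ℝ)) ∧ ∀ i, 0 ≤ y i)
    (x : ℝ → Fin n → ℝ)
    (hsol : IsPhysSolOn (rmat A) (fun j => (b j : ℝ)) (fun i => (c i : ℝ)) x (Set.Ici 0))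
    (p : ℝ → Fin m → ℝ)
    (hp : ∀ t ∈ Set.Ici (0 : ℝ),
      (rmat A * physW (fun i => (c i : ℝ)) (x t) * (rmat A)ᵀ) *ᵥ p t = fun j => (b j : ℝ)) :
    ∃ M : ℝ, ∀ t ∈ Set.Ici (0 : ℝ), ∀ j, |((rmat A)ᵀ *ᵥ p t) j| ≤ M := by
  classical
  rcases Nat.eq_zero_or_pos n with hn | hn
  · exact ⟨0, fun t ht j => absurd j.isLt (by omega)⟩
  have j0 : Fin n := ⟨0, hn⟩
  set B := rmat A with hB
  set bR : Fin m → ℝ := fun j => (b j : ℝ) with hbR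
  set cR : Fin n → ℝ := fun i => (c i : ℝ) with hcRdef
  have hcR : ∀ i, 0 < cR i := fun i => by simp only [hcRdef]; exact_mod_cast hc i
  set w : ℝ → Fin n → ℝ := fun t i => x t i / cR i with hwdef
  have hw : ∀ t ∈ Ici (0:ℝ), ∀ i, 0 < w t i := fun t ht i =>
    div_pos ((hsol t ht).1 i) (hcR i)
  have hBB : (B * Bᵀ).det ≠ 0 := PhysAux.det_BBt_ne_zero B hrank
  set L : ℝ → Matrix (Fin m) (Fin m) ℝ := fun t => B * Matrix.diagonal (w t) * Bᵀ with hLdef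
  have hphysW : ∀ t, physW cR (x t) = Matrix.diagonal (w t) := fun t => rfl
  have hdet : ∀ t ∈ Ici (0:ℝ), 0 < (L t).det := fun t ht =>
    PhysAux.detL_pos B hBB (w t) (hw t ht)
  have hunit : ∀ t ∈ Ici (0:ℝ), IsUnit (L t).det := fun t ht =>
    isUnit_iff_ne_zero.mpr (hdet t ht).ne'
  have hpt : ∀ t ∈ Ici (0:ℝ), p t = (L t)⁻¹ *ᵥ bR := by
    intro t ht
    have h2 : (L t) *ᵥ p t = bR := hp t ht
    calc p t = 1 *ᵥ p t := (Matrix.one_mulVec _).symm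
      _ = ((L t)⁻¹ * L t) *ᵥ p t := by rw [Matrix.nonsing_inv_mul _ (hunit t ht)]
      _ = (L t)⁻¹ *ᵥ ((L t) *ᵥ p t) := by rw [← Matrix.mulVec_mulVec]
      _ = (L t)⁻¹ *ᵥ bR := by rw [h2]
  have hq : ∀ t ∈ Ici (0:ℝ), B *ᵥ (physQ B bR cR (x t)) = bR := by
    intro t ht
    show B *ᵥ (physW cR (x t) *ᵥ (Bᵀ *ᵥ ((B * physW cR (x t) * Bᵀ)⁻¹ *ᵥ bR))) = bR
    rw [hphysW t]
    rw [Matrix.mulVec_mulVec, Matrix.mulVec_mulVec, Matrix.mulVec_mulVec]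
    rw [show B * Matrix.diagonal (w t) * Bᵀ * (B * Matrix.diagonal (w t) * Bᵀ)⁻¹ = 1 from
      Matrix.mul_nonsing_inv _ (hunit t ht), Matrix.one_mulVec]
  have hqsol : ∀ t ∈ Ici (0:ℝ),
      HasDerivWithinAt x (physQ B bR cR (x t) - x t) (Ici 0) t := fun t ht => (hsol t ht).2
  -- separating functionals for good subsets
  have hΨex : ∀ T : Finset (Fin n), ∃ ψ : (Fin m → ℝ) →ₗ[ℝ] ℝ,
      T ∈ PhysAux.goods B bR → (ψ bR = 1 ∧
        ∀ y ∈ Submodule.span ℝ (PhysAux.colv B '' (T : Set (Fin n))), ψ y = 0) := by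
    intro T
    by_cases hT : T ∈ PhysAux.goods B bR
    · have hgood : PhysAux.GoodT B bR T := (Finset.mem_filter.mp hT).2
      obtain ⟨f, hf0, hfmap⟩ :=
        Submodule.exists_dual_map_eq_bot_of_notMem hgood.2.2 inferInstance
      refine ⟨(f bR)⁻¹ • f, fun _ => ⟨?_, ?_⟩⟩
      · simp [inv_mul_cancel₀ hf0]
      · intro y hy
        have h1 : f y ∈ Submodule.map f (Submodule.span ℝ
            (PhysAux.colv B '' (T : Set (Fin n)))) := Submodule.mem_map_of_mem hy
        rw [hfmap] at h1
        have h2 : f y = 0 := by simpa using h1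
        simp [h2]
    · exact ⟨0, fun h => absurd h hT⟩
  choose Ψ hΨ using hΨex
  set θ : Finset (Fin n) → Fin n → ℝ := fun T j => Ψ T (PhysAux.colv B j) with hθdef
  set F : Finset (Fin n) → (Fin n → ℝ) →ₗ[ℝ] ℝ :=
    fun T => (Ψ T).comp (Matrix.mulVecLin B) with hFdef
  have hFval : ∀ T v, F T v = ∑ j : Fin n, v j * θ T j := by
    intro T v
    show Ψ T (B.mulVecLin v) = _
    rw [Matrix.mulVecLin_apply, PhysAux.mulVec_eq_sum_cols, map_sum]
    exact Finset.sum_congr rfl fun j _ => by rw [_root_.map_smul, smul_eq_mul]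
  have hode : ∀ T ∈ PhysAux.goods B bR, ∀ t ∈ Ici (0:ℝ),
      F T (x t) = 1 + (F T (x 0) - 1) * Real.exp (-t) := by
    intro T hT
    refine PhysAux.ode_exp hqsol (F T) (β := 1) ?_
    intro t ht
    show Ψ T (B.mulVecLin (physQ B bR cR (x t) - x t)) = 1 - Ψ T (B.mulVecLin (x t))
    rw [map_sub, map_sub, Matrix.mulVecLin_apply, hq t ht, (hΨ T hT).1]
  set R : ℝ := ∑ T ∈ PhysAux.goods B bR, |F T (x 0) - 1| with hRdef
  have hR0 : 0 ≤ R := Finset.sum_nonneg fun T _ => abs_nonneg _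
  set t₀ : ℝ := max (Real.log (2 * R + 1)) 0 with ht₀def
  have ht₀0 : (0:ℝ) ≤ t₀ := le_max_right _ _
  have hhalf : ∀ T ∈ PhysAux.goods B bR, ∀ t, t₀ ≤ t →
      |F T (x 0) - 1| * Real.exp (-t) ≤ 1/2 := by
    intro T hT t htt
    have h2R : (0:ℝ) < 2*R+1 := by linarith
    have h1 : Real.exp (-t) ≤ (2*R+1)⁻¹ := by
      have hlog : Real.log (2*R+1) ≤ t := le_trans (le_max_left _ _) htt
      have h1b : (2*R+1) ≤ Real.exp t := by
        have := Real.exp_le_exp.mpr hlog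
        rwa [Real.exp_log h2R] at this
      rw [Real.exp_neg]
      exact inv_anti₀ h2R h1b
    have h2 : |F T (x 0) - 1| ≤ R :=
      Finset.single_le_sum (f := fun T' => |F T' (x 0) - 1|) (fun _ _ => abs_nonneg _) hT
    calc |F T (x 0) - 1| * Real.exp (-t) ≤ R * (2*R+1)⁻¹ :=
          mul_le_mul h2 h1 (Real.exp_pos _).le hR0
      _ ≤ 1/2 := by
          rw [← div_eq_mul_inv, div_le_iff₀ h2R]; linarith
  set Θ : ℝ := 1 + ∑ T ∈ PhysAux.goods B bR, ∑ j : Fin n, |θ T j| with hΘdef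
  have hΘpos : 0 < Θ := by
    have : (0:ℝ) ≤ ∑ T ∈ PhysAux.goods B bR, ∑ j : Fin n, |θ T j| :=
      Finset.sum_nonneg fun T _ => Finset.sum_nonneg fun j _ => abs_nonneg _
    linarith
  have hθleΘ : ∀ T ∈ PhysAux.goods B bR, ∀ j, |θ T j| ≤ Θ := by
    intro T hT j
    have h1 : |θ T j| ≤ ∑ j' : Fin n, |θ T j'| :=
      Finset.single_le_sum (f := fun j' => |θ T j'|) (fun _ _ => abs_nonneg _)
        (Finset.mem_univ j)
    have h2 : ∑ j' : Fin n, |θ T j'| ≤ ∑ T' ∈ PhysAux.goods B bR, ∑ j' : Fin n, |θ T' j'| :=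
      Finset.single_le_sum (f := fun T' => ∑ j' : Fin n, |θ T' j'|)
        (fun T' _ => Finset.sum_nonneg fun j' _ => abs_nonneg _) hT
    linarith
  set Cmax : ℝ := 1 + ∑ i : Fin n, cR i with hCmaxdef
  have hCpos : 0 < Cmax := by
    have : (0:ℝ) ≤ ∑ i : Fin n, cR i := Finset.sum_nonneg fun i _ => (hcR i).le
    linarith
  have hcle : ∀ i, cR i ≤ Cmax := by
    intro i
    have h1 : cR i ≤ ∑ i' : Fin n, cR i' :=
      Finset.single_le_sum (f := fun i' => cR i') (fun i' _ => (hcR i').le) (Finset.mem_univ i)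
    linarith
  have hnpos : (0:ℝ) < n := by exact_mod_cast hn
  set ε : ℝ := 1 / (2 * n * Θ * Cmax) with hεdef
  have hεpos : 0 < ε := by
    apply div_pos one_pos
    positivity
  obtain ⟨M₁, hM₁⟩ := PhysAux.alg_bound B bR j0 hBB hεpos
  -- the dynamic condition holds for t ≥ t₀
  have hdyn : ∀ t, t₀ ≤ t → ∀ T ∈ PhysAux.goods B bR,
      ∃ j, j ∉ T ∧ ε ≤ w t j ∧ 0 < PhysAux.delta B (insert j T) := by
    intro t htt T hT
    have ht0 : t ∈ Ici (0:ℝ) := le_trans ht₀0 htt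
    have hgood : PhysAux.GoodT B bR T := (Finset.mem_filter.mp hT).2
    have hF2 : 1/2 ≤ F T (x t) := by
      rw [hode T hT t ht0]
      have h3 := hhalf T hT t htt
      have h4 : -(|F T (x 0) - 1| * Real.exp (-t)) ≤ (F T (x 0) - 1) * Real.exp (-t) := by
        have := neg_abs_le ((F T (x 0) - 1) * Real.exp (-t))
        rwa [abs_mul, abs_of_pos (Real.exp_pos _)] at this
      linarith
    rw [hFval] at hF2
    haveI : Nonempty (Fin n) := ⟨j0⟩
    have hex : ∃ j : Fin n, 1/(2*n) ≤ x t j * θ T j := by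
      by_contra hcon
      push_neg at hcon
      have h5 : ∑ j : Fin n, x t j * θ T j < ∑ _j : Fin n, (1/(2*(n:ℝ))) :=
        Finset.sum_lt_sum_of_nonempty Finset.univ_nonempty (fun j _ => hcon j)
      rw [Finset.sum_const, Finset.card_univ, Fintype.card_fin, nsmul_eq_mul] at h5
      have h6 : (n:ℝ) * (1/(2*(n:ℝ))) = 1/2 := by field_simp
      rw [h6] at h5
      linarith
    obtain ⟨j, hj⟩ := hex
    have hxpos := (hsol t ht0).1 j
    have h2npos : (0:ℝ) < 1/(2*n) := by positivity
    have hθpos : 0 < θ T j := by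
      by_contra hle
      push_neg at hle
      have : x t j * θ T j ≤ 0 := mul_nonpos_of_nonneg_of_nonpos hxpos.le hle
      linarith
    have hjT : j ∉ T := by
      intro hjm
      have := (hΨ T hT).2 (PhysAux.colv B j) (Submodule.subset_span ⟨j, hjm, rfl⟩)
      rw [show Ψ T (PhysAux.colv B j) = θ T j from rfl] at this
      linarith
    have hxj : 1/(2*n*Θ) ≤ x t j := by
      have hθΘ : θ T j ≤ Θ := le_trans (le_abs_self _) (hθleΘ T hT j)
      have h7 : 1/(2*(n:ℝ)) ≤ x t j * Θ :=
        le_trans hj (mul_le_mul_of_nonneg_left hθΘ hxpos.le)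
      rw [div_le_iff₀ (by positivity : (0:ℝ) < 2*n*Θ)]
      have h8 : 1/(2*(n:ℝ)) * (2*n) = 1 := by field_simp
      calc (1:ℝ) = 1/(2*(n:ℝ)) * (2*n) := h8.symm
        _ ≤ x t j * Θ * (2*n) := mul_le_mul_of_nonneg_right h7 (by positivity)
        _ = x t j * (2*n*Θ) := by ring
    have hwj : ε ≤ w t j := by
      show ε ≤ x t j / cR j
      rw [le_div_iff₀ (hcR j)]
      calc ε * cR j ≤ ε * Cmax := mul_le_mul_of_nonneg_left (hcle j) hεpos.le
        _ = 1/(2*n*Θ) := by rw [hεdef]; field_simp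
        _ ≤ x t j := hxj
    have hm1 : 1 ≤ m := by
      by_contra hm
      have hm0 : m = 0 := by omega
      apply hgood.2.2
      subst hm0
      have hbz : bR = 0 := funext fun k => k.elim0
      rw [hbz]
      exact Submodule.zero_mem _
    have hcins : (insert j T).card = m := by
      rw [Finset.card_insert_of_notMem hjT, hgood.1]
      omega
    have hcoljn : PhysAux.colv B j ∉
        Submodule.span ℝ (PhysAux.colv B '' (T : Set (Fin n))) := by
      intro hmem
      have := (hΨ T hT).2 _ hmem
      rw [show Ψ T (PhysAux.colv B j) = θ T j from rfl] at this
      linarith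
    exact ⟨j, hjT, hwj, PhysAux.delta_pos B _ hcins
      (PhysAux.indepOn_insert B T j hjT hgood.2.1 hcoljn)⟩
  -- continuity and bound on the compact piece [0, t₀]
  have hxc : ContinuousOn x (Ici 0) := fun t ht => ((hsol t ht).2).continuousWithinAt
  have hwc : ContinuousOn (fun t => w t) (Ici 0) := by
    apply continuousOn_pi.mpr
    intro i
    exact ((continuous_apply i).comp_continuousOn hxc).div_const _
  have hLc : ContinuousOn (fun t => L t) (Ici 0) := by
    have hg : Continuous (fun v : Fin n → ℝ => B * Matrix.diagonal v * Bᵀ) :=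
      (continuous_const.matrix_mul continuous_id.matrix_diagonal).matrix_mul continuous_const
    exact hg.comp_continuousOn hwc
  have hdetc : ContinuousOn (fun t => (L t).det) (Ici 0) :=
    (continuous_id.matrix_det).comp_continuousOn hLc
  have hinvc : ContinuousOn (fun t => ((L t).det)⁻¹) (Ici 0) :=
    hdetc.inv₀ (fun t ht => (hdet t ht).ne')
  have hadjc : ContinuousOn (fun t => (L t).adjugate *ᵥ bR) (Ici 0) :=
    (continuous_id.matrix_adjugate.matrix_mulVec continuous_const).comp_continuousOn hLc
  have hvecc : ContinuousOn (fun t => Bᵀ *ᵥ ((L t).adjugate *ᵥ bR)) (Ici 0) := by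
    have hBmul : Continuous (fun v : Fin m → ℝ => Bᵀ *ᵥ v) :=
      continuous_const.matrix_mulVec continuous_id
    exact hBmul.comp_continuousOn hadjc
  have hΦc : ContinuousOn
      (fun t => ((L t).det)⁻¹ • (Bᵀ *ᵥ ((L t).adjugate *ᵥ bR))) (Icc 0 t₀) :=
    (hinvc.smul hvecc).mono Icc_subset_Ici_self
  obtain ⟨C₁, hC₁⟩ := (isCompact_Icc (a := (0:ℝ)) (b := t₀)).exists_bound_of_continuousOn hΦc
  have hptv : ∀ t ∈ Ici (0:ℝ),
      Bᵀ *ᵥ p t = ((L t).det)⁻¹ • (Bᵀ *ᵥ ((L t).adjugate *ᵥ bR)) := by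
    intro t ht
    rw [hpt t ht, Matrix.inv_def, Ring.inverse_eq_inv', Matrix.smul_mulVec,
      Matrix.mulVec_smul]
  refine ⟨max M₁ C₁, fun t ht j => ?_⟩
  rcases le_total t t₀ with hle | hle
  · have htm : t ∈ Icc (0:ℝ) t₀ := ⟨ht, hle⟩
    have h1 := hC₁ t htm
    have h2 : |(Bᵀ *ᵥ p t) j| ≤ C₁ := by
      rw [hptv t ht]
      calc |(((L t).det)⁻¹ • (Bᵀ *ᵥ ((L t).adjugate *ᵥ bR))) j|
          = ‖(((L t).det)⁻¹ • (Bᵀ *ᵥ ((L t).adjugate *ᵥ bR))) j‖ := (Real.norm_eq_abs _).symm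
        _ ≤ ‖((L t).det)⁻¹ • (Bᵀ *ᵥ ((L t).adjugate *ᵥ bR))‖ := norm_le_pi_norm _ j
        _ ≤ C₁ := h1
    exact le_trans h2 (le_max_right _ _)
  · have h1 := hM₁ (w t) (hw t ht) (hdyn t hle) j
    have h2 : Bᵀ *ᵥ p t = Bᵀ *ᵥ ((B * Matrix.diagonal (w t) * Bᵀ)⁻¹ *ᵥ bR) := by
      rw [hpt t ht]
    rw [h2]
    exact le_trans h1 (le_max_left _ _)
end

section
/- Fix a strictly feasible starting point s ∈ ℝⁿ with s > 0 and A s = b, and let f^s(x) = Σᵢ cᵢ xᵢ ln(cᵢ xᵢ) − Σᵢ cᵢ xᵢ (1 + ln(sᵢ cᵢ)). For each μ ≥ 0, the convex program min{ μ cᵀx + f^s(x) : A x = b, x ≥ 0 } has a unique optimal solution x(μ), which is strictly positive. Moreover, the curve μ ↦ x(μ) is differentiable, satisfies x(0) = s, and satisfies the Physarum dynamics: d/dμ x(μ) = W(μ)(Aᵀ (A W(μ) Aᵀ)⁻¹ b − c), where W(μ) = diag(x₁(μ)/c₁,…,xₙ(μ)/cₙ). -/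
open Matrix Filter Set Topology

/-- The entropy-regularized objective `μ cᵀx + f^s(x)` where
`f^s(x) = Σᵢ cᵢ xᵢ ln(cᵢ xᵢ) − Σᵢ cᵢ xᵢ (1 + ln(sᵢ cᵢ))`. -/
noncomputable def entObj {n : ℕ} (c : Fin n → ℤ) (s : Fin n → ℝ) (μ : ℝ)
    (z : Fin n → ℝ) : ℝ :=
  μ * ((fun i => (c i : ℝ)) ⬝ᵥ z) +
    (∑ i, (c i : ℝ) * z i * Real.log ((c i : ℝ) * z i)) -
    ∑ i, (c i : ℝ) * z i * (1 + Real.log (s i * (c i : ℝ)))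


section calcsec
variable {m n : ℕ} (B : Matrix (Fin m) (Fin n) ℝ) (cv s : Fin n → ℝ)

noncomputable def mulVecCLM {a b : ℕ} (M : Matrix (Fin a) (Fin b) ℝ) :
    (Fin b → ℝ) →L[ℝ] (Fin a → ℝ) :=
  LinearMap.toContinuousLinearMap M.mulVecLin

@[simp] lemma mulVecCLM_apply {a b : ℕ} (M : Matrix (Fin a) (Fin b) ℝ) (v : Fin b → ℝ) :
    mulVecCLM M v = M *ᵥ v := rfl

noncomputable def dotCLM {a : ℕ} (v : Fin a → ℝ) : (Fin a → ℝ) →L[ℝ] ℝ :=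
  ∑ i, v i • ContinuousLinearMap.proj i

@[simp] lemma dotCLM_apply {a : ℕ} (v u : Fin a → ℝ) : dotCLM v u = v ⬝ᵥ u := by
  simp [dotCLM, dotProduct, ContinuousLinearMap.sum_apply]

noncomputable def coordL (i : Fin n) : ((Fin m → ℝ) × ℝ) →L[ℝ] ℝ :=
  (cv i)⁻¹ • ((ContinuousLinearMap.proj i).comp
    ((mulVecCLM Bᵀ).comp (ContinuousLinearMap.fst ℝ (Fin m → ℝ) ℝ))) -
    ContinuousLinearMap.snd ℝ (Fin m → ℝ) ℝ

@[simp] lemma coordL_apply (i : Fin n) (p : (Fin m → ℝ) × ℝ) :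
    coordL B cv i p = (cv i)⁻¹ * (Bᵀ *ᵥ p.1) i - p.2 := by
  simp [coordL]

noncomputable def Xm (p : (Fin m → ℝ) × ℝ) : Fin n → ℝ :=
  fun i => s i * Real.exp (coordL B cv i p)

noncomputable def DXm (p : (Fin m → ℝ) × ℝ) : ((Fin m → ℝ) × ℝ) →L[ℝ] (Fin n → ℝ) :=
  ContinuousLinearMap.pi (fun i => Xm B cv s p i • coordL B cv i)

lemma hasStrict_Xm (p : (Fin m → ℝ) × ℝ) :
    HasStrictFDerivAt (Xm B cv s) (DXm B cv s p) p := by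
  apply hasStrictFDerivAt_pi''
  intro i
  have h1 := (Real.hasStrictDerivAt_exp (coordL B cv i p)).comp_hasStrictFDerivAt p
    ((coordL B cv i).hasStrictFDerivAt)
  have h2 := h1.const_mul (s i)
  have : (ContinuousLinearMap.proj i).comp (DXm B cv s p)
      = s i • (Real.exp (coordL B cv i p) • coordL B cv i) := by
    rw [DXm, ContinuousLinearMap.proj_pi, Xm, smul_smul]
  rw [this]
  exact h2

lemma exp_ge_quarter_sq {z : ℝ} (hz : 0 ≤ z) : z ^ 2 / 4 ≤ Real.exp z := by
  have h1 : z / 2 + 1 ≤ Real.exp (z / 2) := Real.add_one_le_exp _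
  have h2 : Real.exp (z / 2) * Real.exp (z / 2) = Real.exp z := by
    rw [← Real.exp_add]; ring_nf
  nlinarith [Real.exp_pos (z / 2)]

lemma coercive_term {c s t μ : ℝ} (hc : 0 < c) (hs : 0 < s) :
    s * |t| - 4 * c * s * Real.exp μ ≤ c * s * Real.exp (c⁻¹ * t - μ) - s * t := by
  have hA := Real.exp_pos (-μ)
  have hP := Real.exp_pos μ
  have hAP : Real.exp (-μ) * Real.exp μ = 1 := by rw [← Real.exp_add]; simp
  have hE : Real.exp (c⁻¹ * t - μ) = Real.exp (c⁻¹ * t) * Real.exp (-μ) := by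
    rw [← Real.exp_add]; ring_nf
  rcases le_or_gt 0 t with ht | ht
  · rw [abs_of_nonneg ht]
    have key : (c⁻¹ * t) ^ 2 / 4 ≤ Real.exp (c⁻¹ * t) :=
      exp_ge_quarter_sq (by positivity)
    have ht2 : 4 * c ^ 2 * ((c⁻¹ * t) ^ 2 / 4) = t ^ 2 := by
      field_simp
    have key2 : t ^ 2 ≤ 4 * c ^ 2 * Real.exp (c⁻¹ * t) := by
      rw [← ht2]
      exact mul_le_mul_of_nonneg_left key (by positivity)
    have h4 : s * Real.exp (-μ) * t ^ 2
        ≤ 4 * c * (c * s * (Real.exp (c⁻¹ * t) * Real.exp (-μ))) := by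
      nlinarith [mul_le_mul_of_nonneg_left key2 (mul_nonneg hs.le hA.le)]
    have expand : s * Real.exp (-μ) * (t - 4 * c * Real.exp μ) ^ 2
        = s * Real.exp (-μ) * t ^ 2 - 8 * c * s * t * (Real.exp (-μ) * Real.exp μ)
          + 16 * c ^ 2 * s * Real.exp μ * (Real.exp (-μ) * Real.exp μ) := by ring
    rw [hAP, mul_one, mul_one] at expand
    have h5 : 8 * c * s * t ≤ s * Real.exp (-μ) * t ^ 2 + 16 * c ^ 2 * s * Real.exp μ := by
      have hnn := mul_nonneg (mul_nonneg hs.le hA.le)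
        (sq_nonneg (t - 4 * c * Real.exp μ))
      linarith [expand ▸ hnn]
    have h6 : 4 * c * (2 * (s * t))
        ≤ 4 * c * (c * s * Real.exp (c⁻¹ * t - μ) + 4 * c * s * Real.exp μ) := by
      rw [hE]; linarith
    have h7 := le_of_mul_le_mul_left h6 (by positivity : (0:ℝ) < 4 * c)
    linarith
  · rw [abs_of_neg ht]
    have hEp := Real.exp_pos (c⁻¹ * t - μ)
    nlinarith [mul_pos hc hs, mul_pos (mul_pos hc hs) hEp,
      mul_pos (mul_pos (mul_pos (by norm_num : (0:ℝ) < 4) hc) hs) hP]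

lemma exists_dual {bv : Fin m → ℝ} (hn : 0 < n) (hcv : ∀ i, 0 < cv i) (hs : ∀ i, 0 < s i)
    (hT : Function.Injective (Bᵀ.mulVec)) (hsb : B *ᵥ s = bv) (μ : ℝ) :
    ∃ l : Fin m → ℝ, B *ᵥ Xm B cv s (l, μ) = bv := by
  classical
  set φ : (Fin m → ℝ) → ℝ := fun l => dotCLM cv (Xm B cv s (l, μ)) - dotCLM bv l with hφdef
  -- continuity
  have hXc : Continuous (Xm B cv s) := by
    apply continuous_pi
    intro i
    exact continuous_const.mul (Real.continuous_exp.comp (coordL B cv i).continuous)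
  have hφc : Continuous φ := by
    apply Continuous.sub
    · exact (dotCLM cv).continuous.comp (hXc.comp (continuous_id.prodMk continuous_const))
    · exact (dotCLM bv).continuous
  -- rewrite of φ
  have hb' : ∀ l : Fin m → ℝ, bv ⬝ᵥ l = ∑ i, s i * (Bᵀ *ᵥ l) i := by
    intro l
    rw [← hsb, dotProduct_comm, Matrix.dotProduct_mulVec, ← Matrix.mulVec_transpose,
      dotProduct_comm]
    rfl
  have hφeq : ∀ l, φ l
      = ∑ i, (cv i * s i * Real.exp ((cv i)⁻¹ * (Bᵀ *ᵥ l) i - μ) - s i * (Bᵀ *ᵥ l) i) := by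
    intro l
    rw [hφdef]
    simp only [dotCLM_apply]
    rw [hb' l, dotProduct, ← Finset.sum_sub_distrib]
    refine Finset.sum_congr rfl fun i _ => ?_
    rw [Xm]
    simp only [coordL_apply]
    ring
  -- coercivity
  obtain ⟨i₀⟩ : Nonempty (Fin n) := ⟨⟨0, hn⟩⟩
  set σ : ℝ := Finset.univ.inf' ⟨i₀, Finset.mem_univ i₀⟩ s with hσdef
  have hσpos : 0 < σ := by
    rw [hσdef]; refine (Finset.lt_inf'_iff _).2 ?_
    exact fun i _ => hs i
  have hσle : ∀ i, σ ≤ s i := fun i => Finset.inf'_le s (Finset.mem_univ i)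
  set K : ℝ := ∑ i, 4 * cv i * s i * Real.exp μ with hKdef
  have hlow : ∀ l : Fin m → ℝ, σ * ‖Bᵀ *ᵥ l‖ - K ≤ φ l := by
    intro l
    set u := Bᵀ *ᵥ l with hu
    have step1 : (∑ i, s i * |u i|) - K ≤ φ l := by
      rw [hφeq l, hKdef, ← Finset.sum_sub_distrib]
      exact Finset.sum_le_sum fun i _ => coercive_term (hcv i) (hs i)
    have step2 : σ * ‖u‖ ≤ ∑ i, s i * |u i| := by
      have hsum_nonneg : (0:ℝ) ≤ ∑ i, s i * |u i| :=
        Finset.sum_nonneg fun i _ => mul_nonneg (hs i).le (abs_nonneg _)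
      have hall : ∀ i, ‖u i‖ ≤ σ⁻¹ * ∑ j, s j * |u j| := by
        intro i
        have h1 : s i * |u i| ≤ ∑ j, s j * |u j| :=
          Finset.single_le_sum (fun j _ => mul_nonneg (hs j).le (abs_nonneg _))
            (Finset.mem_univ i)
        have h2 : σ * |u i| ≤ s i * |u i| :=
          mul_le_mul_of_nonneg_right (hσle i) (abs_nonneg _)
        rw [Real.norm_eq_abs, ← mul_le_mul_iff_right₀ hσpos, ← mul_assoc,
          mul_inv_cancel₀ hσpos.ne', one_mul]
        linarith
      have := (pi_norm_le_iff_of_nonneg (by positivity)).mpr hall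
      calc σ * ‖u‖ ≤ σ * (σ⁻¹ * ∑ j, s j * |u j|) :=
            mul_le_mul_of_nonneg_left this hσpos.le
        _ = ∑ j, s j * |u j| := by
            rw [← mul_assoc, mul_inv_cancel₀ hσpos.ne', one_mul]
    linarith
  have hker : LinearMap.ker (Bᵀ.mulVecLin) = ⊥ := by
    rw [LinearMap.ker_eq_bot]
    intro a b hab
    exact hT (by simpa only [Matrix.mulVecLin_apply] using hab)
  have hemb : Topology.IsClosedEmbedding (Bᵀ.mulVecLin) :=
    LinearMap.isClosedEmbedding_of_injective hker
  have htend0 : Filter.Tendsto (Bᵀ.mulVec) (Filter.cocompact _) (Filter.cocompact _) := by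
    exact hemb.tendsto_cocompact
  have htend1 : Filter.Tendsto (fun l : Fin m → ℝ => ‖Bᵀ *ᵥ l‖)
      (Filter.cocompact _) Filter.atTop := by
    exact tendsto_norm_cocompact_atTop.comp htend0
  have htend2 : Filter.Tendsto (fun l : Fin m → ℝ => σ * ‖Bᵀ *ᵥ l‖ - K)
      (Filter.cocompact _) Filter.atTop := by
    apply Filter.tendsto_atTop_add_const_right
    exact htend1.const_mul_atTop hσpos
  have hφtend : Filter.Tendsto φ (Filter.cocompact _) Filter.atTop :=
    Filter.tendsto_atTop_mono hlow htend2
  obtain ⟨l₀, hl₀⟩ := hφc.exists_forall_le hφtend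
  -- first-order condition
  have hlocmin : IsLocalMin φ l₀ := Filter.Eventually.of_forall hl₀
  have hι : HasFDerivAt (fun l : Fin m → ℝ => (l, μ))
      ((ContinuousLinearMap.id ℝ (Fin m → ℝ)).prod (0 : (Fin m → ℝ) →L[ℝ] ℝ)) l₀ :=
    (hasFDerivAt_id l₀).prodMk (hasFDerivAt_const μ l₀)
  have h1 : HasFDerivAt (fun l : Fin m → ℝ => Xm B cv s (l, μ))
      ((DXm B cv s (l₀, μ)).comp
        ((ContinuousLinearMap.id ℝ (Fin m → ℝ)).prod (0 : (Fin m → ℝ) →L[ℝ] ℝ))) l₀ :=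
    by have h := (hasStrict_Xm B cv s (l₀, μ)).hasFDerivAt.comp l₀ hι; exact h
  have h2 : HasFDerivAt φ
      (((dotCLM cv).comp ((DXm B cv s (l₀, μ)).comp
        ((ContinuousLinearMap.id ℝ (Fin m → ℝ)).prod (0 : (Fin m → ℝ) →L[ℝ] ℝ))))
        - dotCLM bv) l₀ := by
    apply HasFDerivAt.sub
    · exact (dotCLM cv).hasFDerivAt.comp l₀ h1
    · exact (dotCLM bv).hasFDerivAt
  have hzero := hlocmin.hasFDerivAt_eq_zero h2
  refine ⟨l₀, funext fun j => ?_⟩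
  have hev := congrArg (fun T : (Fin m → ℝ) →L[ℝ] ℝ => T (Pi.single j 1)) hzero
  simp only [ContinuousLinearMap.sub_apply, ContinuousLinearMap.comp_apply,
    ContinuousLinearMap.prod_apply, ContinuousLinearMap.coe_id', id_eq,
    ContinuousLinearMap.zero_apply, dotCLM_apply] at hev
  rw [DXm] at hev
  have hpi : ((ContinuousLinearMap.pi fun i => Xm B cv s (l₀, μ) i • coordL B cv i)
      ((Pi.single j 1 : Fin m → ℝ), (0:ℝ)))
      = fun i => Xm B cv s (l₀, μ) i * ((cv i)⁻¹ * (Bᵀ *ᵥ (Pi.single j 1 : Fin m → ℝ)) i - 0) := by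
    funext i
    simp [smul_eq_mul]
  rw [hpi] at hev
  have hsingle : (Bᵀ *ᵥ (Pi.single j 1 : Fin m → ℝ)) = fun i => B j i := by
    funext i
    rw [Matrix.mulVec_single]
    simp [Matrix.transpose_apply]
  rw [hsingle] at hev
  have hlhs : cv ⬝ᵥ (fun i => Xm B cv s (l₀, μ) i * ((cv i)⁻¹ * B j i - 0))
      = (B *ᵥ Xm B cv s (l₀, μ)) j := by
    rw [dotProduct, Matrix.mulVec, dotProduct]
    refine Finset.sum_congr rfl fun i _ => ?_
    field_simp [(hcv i).ne']
    ring
  have hrhs : bv ⬝ᵥ (Pi.single j 1 : Fin m → ℝ) = bv j := by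
    rw [dotProduct_single, mul_one]
  rw [hlhs, hrhs] at hev
  linarith

noncomputable def ent1 (c s μ t : ℝ) : ℝ :=
  μ * (c * t) + c * t * Real.log (c * t) - c * t * (1 + Real.log (s * c))

lemma ent1_key {c s x μ : ℝ} (hc : 0 < c) (hs : 0 < s) (hx : 0 < x) {t : ℝ} (ht : 0 ≤ t) :
    c * (μ + Real.log (x / s)) * (t - x) ≤ ent1 c s μ t - ent1 c s μ x ∧
    (ent1 c s μ t - ent1 c s μ x = c * (μ + Real.log (x / s)) * (t - x) → t = x) := by
  rcases ht.eq_or_lt with rfl | ht'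
  · have h0 : ent1 c s μ 0 = 0 := by simp [ent1]
    have hkey : ent1 c s μ 0 - ent1 c s μ x - c * (μ + Real.log (x / s)) * (0 - x)
        = c * x := by
      rw [h0]; unfold ent1
      rw [Real.log_mul hc.ne' hx.ne', Real.log_mul hs.ne' hc.ne',
        Real.log_div hx.ne' hs.ne']
      ring
    constructor
    · nlinarith [mul_pos hc hx]
    · intro h; nlinarith [mul_pos hc hx]
  · have hexp : ent1 c s μ t - ent1 c s μ x - c * (μ + Real.log (x / s)) * (t - x)
        = c * (t * (Real.log t - Real.log x) - t + x) := by
      unfold ent1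
      rw [Real.log_mul hc.ne' ht'.ne', Real.log_mul hc.ne' hx.ne',
        Real.log_mul hs.ne' hc.ne', Real.log_div hx.ne' hs.ne']
      ring
    have hlog : Real.log x - Real.log t ≤ x / t - 1 := by
      have := Real.log_le_sub_one_of_pos (div_pos hx ht')
      rwa [Real.log_div hx.ne' ht'.ne'] at this
    have hmul : t * (Real.log x - Real.log t) ≤ x - t := by
      have := mul_le_mul_of_nonneg_left hlog ht'.le
      calc t * (Real.log x - Real.log t) ≤ t * (x / t - 1) := this
        _ = x - t := by field_simp
    constructor
    · nlinarith
    · intro h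
      by_contra hne
      have hxt : x / t ≠ 1 := by
        intro h1
        exact hne ((div_eq_one_iff_eq ht'.ne').mp h1).symm
      have hstrict := Real.log_lt_sub_one_of_pos (div_pos hx ht') hxt
      rw [Real.log_div hx.ne' ht'.ne'] at hstrict
      have : t * (Real.log x - Real.log t) < x - t := by
        have := mul_lt_mul_of_pos_left hstrict ht'
        calc t * (Real.log x - Real.log t) < t * (x / t - 1) := this
          _ = x - t := by field_simp
      nlinarith

lemma Xm_pos (hs : ∀ i, 0 < s i) (p : (Fin m → ℝ) × ℝ) (i : Fin n) : 0 < Xm B cv s p i :=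
  mul_pos (hs i) (Real.exp_pos _)

lemma primal_opt {bv : Fin m → ℝ} (hcv : ∀ i, 0 < cv i) (hs : ∀ i, 0 < s i)
    {μ : ℝ} {l : Fin m → ℝ} {z : Fin n → ℝ}
    (hz : B *ᵥ z = bv) (hznn : ∀ i, 0 ≤ z i) (hl : B *ᵥ Xm B cv s (l, μ) = bv) :
    (∑ i, ent1 (cv i) (s i) μ (Xm B cv s (l, μ) i)) ≤ ∑ i, ent1 (cv i) (s i) μ (z i) ∧
    ((∑ i, ent1 (cv i) (s i) μ (z i)) = ∑ i, ent1 (cv i) (s i) μ (Xm B cv s (l, μ) i)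
      → z = Xm B cv s (l, μ)) := by
  set x : Fin n → ℝ := Xm B cv s (l, μ) with hx
  have hxpos : ∀ i, 0 < x i := Xm_pos B cv s hs (l, μ)
  set g : Fin n → ℝ := fun i => cv i * (μ + Real.log (x i / s i)) with hg
  have hgB : ∀ i, g i = (Bᵀ *ᵥ l) i := by
    intro i
    have hlog : Real.log (x i / s i) = (cv i)⁻¹ * (Bᵀ *ᵥ l) i - μ := by
      rw [hx]
      show Real.log (s i * Real.exp (coordL B cv i (l, μ)) / s i) = _
      rw [mul_comm, mul_div_assoc, div_self (hs i).ne', mul_one, Real.log_exp, coordL_apply]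
    simp only [hg]
    rw [hlog]
    field_simp
    rw [add_sub_cancel]; field_simp [(hcv i).ne']
  have hsum0 : ∑ i, g i * (z i - x i) = 0 := by
    have h1 : ∑ i, g i * (z i - x i) = (Bᵀ *ᵥ l) ⬝ᵥ (z - x) := by
      rw [dotProduct]
      exact Finset.sum_congr rfl fun i _ => by rw [hgB i, Pi.sub_apply]
    rw [h1, Matrix.mulVec_transpose, ← Matrix.dotProduct_mulVec,
      Matrix.mulVec_sub, hz, hl, sub_self, dotProduct_zero]
  have key : ∀ i, g i * (z i - x i) ≤ ent1 (cv i) (s i) μ (z i) - ent1 (cv i) (s i) μ (x i)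
      ∧ (ent1 (cv i) (s i) μ (z i) - ent1 (cv i) (s i) μ (x i) = g i * (z i - x i)
        → z i = x i) := by
    intro i
    have h := ent1_key (μ := μ) (hcv i) (hs i) (hxpos i) (hznn i)
    have hgi : g i = cv i * (μ + Real.log (x i / s i)) := rfl
    rw [hgi]
    exact ⟨h.1, fun he => h.2 he⟩
  have hsplit : ∑ i, (ent1 (cv i) (s i) μ (z i) - ent1 (cv i) (s i) μ (x i)
      - g i * (z i - x i))
      = (∑ i, ent1 (cv i) (s i) μ (z i)) - (∑ i, ent1 (cv i) (s i) μ (x i)) := by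
    rw [Finset.sum_sub_distrib, Finset.sum_sub_distrib, hsum0, sub_zero]
  have hnn : ∀ i ∈ Finset.univ, (0:ℝ) ≤ ent1 (cv i) (s i) μ (z i)
      - ent1 (cv i) (s i) μ (x i) - g i * (z i - x i) :=
    fun i _ => by linarith [(key i).1]
  constructor
  · have := Finset.sum_nonneg hnn
    rw [hsplit] at this
    linarith
  · intro heq
    have hzero : ∑ i, (ent1 (cv i) (s i) μ (z i) - ent1 (cv i) (s i) μ (x i)
        - g i * (z i - x i)) = 0 := by rw [hsplit]; linarith
    have hterm := (Finset.sum_eq_zero_iff_of_nonneg hnn).mp hzero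
    funext i
    exact (key i).2 (by linarith [hterm i (Finset.mem_univ i)])

lemma dual_unique {bv : Fin m → ℝ} (hcv : ∀ i, 0 < cv i) (hs : ∀ i, 0 < s i)
    (hT : Function.Injective (Bᵀ.mulVec)) {μ : ℝ} {l₁ l₂ : Fin m → ℝ}
    (h1 : B *ᵥ Xm B cv s (l₁, μ) = bv) (h2 : B *ᵥ Xm B cv s (l₂, μ) = bv) :
    l₁ = l₂ := by
  have hp1 := primal_opt B cv s hcv hs h2 (fun i => (Xm_pos B cv s hs (l₂, μ) i).le) h1
  have hp2 := primal_opt B cv s hcv hs h1 (fun i => (Xm_pos B cv s hs (l₁, μ) i).le) h2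
  have heq : Xm B cv s (l₂, μ) = Xm B cv s (l₁, μ) :=
    hp1.2 (le_antisymm hp2.1 hp1.1)
  have hcoord : ∀ i, (Bᵀ *ᵥ l₂) i = (Bᵀ *ᵥ l₁) i := by
    intro i
    have h := congrFun heq i
    have hexp : Real.exp (coordL B cv i (l₂, μ)) = Real.exp (coordL B cv i (l₁, μ)) :=
      mul_left_cancel₀ (hs i).ne' h
    have h2 := Real.exp_injective hexp
    rw [coordL_apply, coordL_apply] at h2
    have h3 : (cv i)⁻¹ * (Bᵀ *ᵥ l₂) i = (cv i)⁻¹ * (Bᵀ *ᵥ l₁) i := by linarith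
    exact mul_left_cancel₀ (inv_ne_zero (hcv i).ne') h3
  exact hT (funext fun i => (hcoord i).symm)

lemma L_posdef (hT : Function.Injective (Bᵀ.mulVec))
    (d : Fin n → ℝ) (hd : ∀ i, 0 < d i) :
    (B * Matrix.diagonal d * Bᵀ).PosDef := by
  refine Matrix.PosDef.of_dotProduct_mulVec_pos ?_ ?_
  · unfold Matrix.IsHermitian
    rw [conjTranspose_eq_transpose_of_trivial]
    rw [Matrix.transpose_mul, Matrix.transpose_mul, transpose_transpose,
      Matrix.diagonal_transpose, Matrix.mul_assoc]
  · intro x hx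
    have hu : Bᵀ *ᵥ x ≠ 0 := by
      intro h0
      exact hx (hT (by simpa using h0))
    have key : star x ⬝ᵥ ((B * Matrix.diagonal d * Bᵀ) *ᵥ x)
        = ∑ i, d i * ((Bᵀ *ᵥ x) i)^2 := by
      rw [← Matrix.mulVec_mulVec, ← Matrix.mulVec_mulVec]
      rw [show (star x : Fin _ → ℝ) = x from rfl]
      rw [Matrix.dotProduct_mulVec, ← Matrix.mulVec_transpose]
      simp [dotProduct, Matrix.mulVec_diagonal]
      refine Finset.sum_congr rfl fun i _ => by ring
    rw [key]
    obtain ⟨j, hj⟩ : ∃ j, (Bᵀ *ᵥ x) j ≠ 0 := by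
      by_contra hcon; push_neg at hcon; exact hu (funext hcon)
    refine Finset.sum_pos' (fun i _ => mul_nonneg (hd i).le (sq_nonneg _))
      ⟨j, Finset.mem_univ j, ?_⟩
    have := hd j
    positivity

lemma deriv_part {bv : Fin m → ℝ} (hcv : ∀ i, 0 < cv i) (hs : ∀ i, 0 < s i)
    (hT : Function.Injective (Bᵀ.mulVec)) {μ₀ : ℝ} {l₀ : Fin m → ℝ}
    (hds : B *ᵥ Xm B cv s (l₀, μ₀) = bv) :
    ∃ g : ℝ → (Fin m → ℝ),
      (∀ᶠ μ in nhds μ₀, B *ᵥ Xm B cv s (g μ, μ) = bv) ∧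
      HasDerivAt (fun μ => Xm B cv s (g μ, μ))
        (Matrix.diagonal (fun i => Xm B cv s (l₀, μ₀) i / cv i) *ᵥ
          (Bᵀ *ᵥ ((B * Matrix.diagonal (fun i => Xm B cv s (l₀, μ₀) i / cv i) * Bᵀ)⁻¹ *ᵥ bv)
            - cv)) μ₀ := by
  classical
  set p₀ : (Fin m → ℝ) × ℝ := (l₀, μ₀) with hp₀
  set x₀ : Fin n → ℝ := Xm B cv s p₀ with hx₀
  have hx₀pos : ∀ i, 0 < x₀ i := Xm_pos B cv s hs p₀
  set W : Matrix (Fin n) (Fin n) ℝ := Matrix.diagonal (fun i => x₀ i / cv i) with hW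
  set L : Matrix (Fin m) (Fin m) ℝ := B * W * Bᵀ with hL
  have hLpd : L.PosDef := L_posdef B hT _ (fun i => div_pos (hx₀pos i) (hcv i))
  have hdet : IsUnit L.det := (Matrix.isUnit_iff_isUnit_det L).mp hLpd.isUnit
  have hLL : L * L⁻¹ = 1 := Matrix.mul_nonsing_inv L hdet
  have hLL' : L⁻¹ * L = 1 := Matrix.nonsing_inv_mul L hdet
  -- the derivative of Φ
  set DΦ : ((Fin m → ℝ) × ℝ) →L[ℝ] ((Fin m → ℝ) × ℝ) :=
    ((mulVecCLM B).comp (DXm B cv s p₀)).prod (ContinuousLinearMap.snd ℝ (Fin m → ℝ) ℝ)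
    with hDΦ
  set Jc : ((Fin m → ℝ) × ℝ) →L[ℝ] ((Fin m → ℝ) × ℝ) :=
    ((mulVecCLM L⁻¹).comp ((ContinuousLinearMap.fst ℝ (Fin m → ℝ) ℝ)
      + (ContinuousLinearMap.snd ℝ (Fin m → ℝ) ℝ).smulRight bv)).prod
      (ContinuousLinearMap.snd ℝ (Fin m → ℝ) ℝ) with hJc
  have hDXval : ∀ q : (Fin m → ℝ) × ℝ,
      DXm B cv s p₀ q = W *ᵥ (Bᵀ *ᵥ q.1) - q.2 • x₀ := by
    intro q
    funext i
    rw [DXm]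
    simp only [ContinuousLinearMap.pi_apply, ContinuousLinearMap.smul_apply, coordL_apply,
      smul_eq_mul, Pi.sub_apply, Pi.smul_apply]
    rw [hW, Matrix.mulVec_diagonal]
    have : Xm B cv s p₀ i = x₀ i := rfl
    rw [this]
    field_simp
  have hDΦval : ∀ q : (Fin m → ℝ) × ℝ, DΦ q = (L *ᵥ q.1 - q.2 • bv, q.2) := by
    intro q
    rw [hDΦ]
    simp only [ContinuousLinearMap.prod_apply, ContinuousLinearMap.comp_apply,
      mulVecCLM_apply, ContinuousLinearMap.coe_snd']
    rw [hDXval q]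
    congr 1
    rw [Matrix.mulVec_sub, Matrix.mulVec_mulVec, Matrix.mulVec_mulVec,
      Matrix.mulVec_smul, hds]
  have hJcval : ∀ q : (Fin m → ℝ) × ℝ, Jc q = (L⁻¹ *ᵥ (q.1 + q.2 • bv), q.2) := by
    intro q
    rw [hJc]
    simp only [ContinuousLinearMap.prod_apply, ContinuousLinearMap.comp_apply,
      mulVecCLM_apply, ContinuousLinearMap.coe_snd', ContinuousLinearMap.add_apply,
      ContinuousLinearMap.coe_fst', ContinuousLinearMap.smulRight_apply]
  have hleft : Function.LeftInverse Jc DΦ := by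
    intro q
    rw [hDΦval q, hJcval (L *ᵥ q.1 - q.2 • bv, q.2)]
    have : (L *ᵥ q.1 - q.2 • bv) + q.2 • bv = L *ᵥ q.1 := by
      rw [sub_add_cancel]
    simp only [this]
    rw [Matrix.mulVec_mulVec, hLL', Matrix.one_mulVec]
  have hright : Function.RightInverse Jc DΦ := by
    intro q
    rw [hJcval q, hDΦval (L⁻¹ *ᵥ (q.1 + q.2 • bv), q.2)]
    rw [Matrix.mulVec_mulVec, hLL, Matrix.one_mulVec, add_sub_cancel_right]
  set EΦ : ((Fin m → ℝ) × ℝ) ≃L[ℝ] ((Fin m → ℝ) × ℝ) :=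
    ContinuousLinearEquiv.equivOfInverse DΦ Jc hleft hright with hEΦ
  set Φ : ((Fin m → ℝ) × ℝ) → ((Fin m → ℝ) × ℝ) :=
    fun p => (B *ᵥ Xm B cv s p, p.2) with hΦ
  have hΦs : HasStrictFDerivAt Φ (EΦ : ((Fin m → ℝ) × ℝ) →L[ℝ] ((Fin m → ℝ) × ℝ)) p₀ := by
    have h1 : HasStrictFDerivAt (fun p : (Fin m → ℝ) × ℝ => B *ᵥ Xm B cv s p)
        ((mulVecCLM B).comp (DXm B cv s p₀)) p₀ :=
      (mulVecCLM B).hasStrictFDerivAt.comp p₀ (hasStrict_Xm B cv s p₀)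
    have h2 : HasStrictFDerivAt (fun p : (Fin m → ℝ) × ℝ => p.2)
        (ContinuousLinearMap.snd ℝ (Fin m → ℝ) ℝ) p₀ :=
      (ContinuousLinearMap.snd ℝ (Fin m → ℝ) ℝ).hasStrictFDerivAt
    have h3 := h1.prodMk h2
    have hco : (EΦ : ((Fin m → ℝ) × ℝ) →L[ℝ] ((Fin m → ℝ) × ℝ)) = DΦ := rfl
    rw [hco]
    exact h3
  have hΦp₀ : Φ p₀ = (bv, μ₀) := by
    rw [hΦ]
    exact Prod.ext hds rfl
  set ψ : ((Fin m → ℝ) × ℝ) → ((Fin m → ℝ) × ℝ) := hΦs.localInverse Φ _ p₀ with hψ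
  have hinv : ∀ᶠ y in nhds ((bv, μ₀) : (Fin m → ℝ) × ℝ), Φ (ψ y) = y := by
    have := hΦs.eventually_right_inverse
    rwa [hΦp₀] at this
  have hψd : HasStrictFDerivAt ψ
      (EΦ.symm : ((Fin m → ℝ) × ℝ) →L[ℝ] ((Fin m → ℝ) × ℝ)) ((bv, μ₀)) := by
    have := hΦs.to_localInverse
    rwa [hΦp₀] at this
  have hψp₀ : ψ (bv, μ₀) = p₀ := by
    rw [← hΦp₀]
    exact hΦs.localInverse_apply_image
  have hιd : HasDerivAt (fun μ : ℝ => ((bv, μ) : (Fin m → ℝ) × ℝ))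
      ((0, 1) : (Fin m → ℝ) × ℝ) μ₀ :=
    (hasDerivAt_const μ₀ bv).prodMk (hasDerivAt_id μ₀)
  have hgd : HasDerivAt (fun μ : ℝ => ψ (bv, μ))
      ((EΦ.symm : ((Fin m → ℝ) × ℝ) →L[ℝ] ((Fin m → ℝ) × ℝ)) ((0, 1) : (Fin m → ℝ) × ℝ)) μ₀ :=
    hψd.hasFDerivAt.comp_hasDerivAt μ₀ hιd
  have hsymmval : (EΦ.symm : ((Fin m → ℝ) × ℝ) →L[ℝ] ((Fin m → ℝ) × ℝ))
      ((0, 1) : (Fin m → ℝ) × ℝ) = (L⁻¹ *ᵥ bv, 1) := by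
    have : (EΦ.symm : ((Fin m → ℝ) × ℝ) →L[ℝ] ((Fin m → ℝ) × ℝ))
        ((0, 1) : (Fin m → ℝ) × ℝ) = Jc ((0, 1) : (Fin m → ℝ) × ℝ) := rfl
    rw [this, hJcval]
    simp
  rw [hsymmval] at hgd
  have hXd : HasDerivAt (fun μ : ℝ => Xm B cv s (ψ (bv, μ)))
      (DXm B cv s p₀ ((L⁻¹ *ᵥ bv, 1) : (Fin m → ℝ) × ℝ)) μ₀ := by
    have hf : HasFDerivAt (Xm B cv s) (DXm B cv s p₀) (ψ (bv, μ₀)) := by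
      rw [hψp₀]
      exact (hasStrict_Xm B cv s p₀).hasFDerivAt
    exact hf.comp_hasDerivAt μ₀ hgd
  have hVval : DXm B cv s p₀ ((L⁻¹ *ᵥ bv, 1) : (Fin m → ℝ) × ℝ)
      = W *ᵥ (Bᵀ *ᵥ (L⁻¹ *ᵥ bv) - cv) := by
    rw [hDXval]
    rw [Matrix.mulVec_sub, one_smul]
    congr 1
    funext i
    rw [hW, Matrix.mulVec_diagonal]
    exact (div_mul_cancel₀ (x₀ i) (hcv i).ne').symm
  have heq2 : ∀ᶠ μ in nhds μ₀, (ψ (bv, μ)).2 = μ ∧ B *ᵥ Xm B cv s (ψ (bv, μ)) = bv := by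
    have hcont : Filter.Tendsto (fun μ : ℝ => ((bv, μ) : (Fin m → ℝ) × ℝ))
        (nhds μ₀) (nhds ((bv, μ₀) : (Fin m → ℝ) × ℝ)) :=
      (continuous_const.prodMk continuous_id).tendsto μ₀
    filter_upwards [hcont.eventually hinv] with μ hμ
    exact ⟨congrArg Prod.snd hμ, congrArg Prod.fst hμ⟩
  have hpair : ∀ᶠ μ in nhds μ₀, ψ (bv, μ) = ((ψ (bv, μ)).1, μ) := by
    filter_upwards [heq2] with μ hμ
    exact Prod.ext_iff.mpr ⟨rfl, hμ.1⟩
  refine ⟨fun μ => (ψ (bv, μ)).1, ?_, ?_⟩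
  · filter_upwards [heq2, hpair] with μ hμ hp
    rw [← hp]
    exact hμ.2
  · have hcongr : (fun μ => Xm B cv s ((ψ (bv, μ)).1, μ))
        =ᶠ[nhds μ₀] (fun μ => Xm B cv s (ψ (bv, μ))) := by
      filter_upwards [hpair] with μ hp
      rw [← hp]
    rw [hVval] at hXd
    exact hXd.congr_of_eventuallyEq hcongr
lemma main_aux {bv : Fin m → ℝ} (hn : 0 < n) (hcv : ∀ i, 0 < cv i) (hs : ∀ i, 0 < s i)
    (hT : Function.Injective (Bᵀ.mulVec)) (hsb : B *ᵥ s = bv) :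
    ∃ x : ℝ → Fin n → ℝ, x 0 = s ∧ ∀ μ : ℝ,
      (B *ᵥ x μ = bv) ∧ (∀ i, 0 < x μ i) ∧
      (∀ z, B *ᵥ z = bv → (∀ i, 0 ≤ z i) →
        (∑ i, ent1 (cv i) (s i) μ (x μ i)) ≤ (∑ i, ent1 (cv i) (s i) μ (z i)) ∧
        ((∑ i, ent1 (cv i) (s i) μ (z i)) = (∑ i, ent1 (cv i) (s i) μ (x μ i)) → z = x μ)) ∧
      HasDerivAt x (Matrix.diagonal (fun i => x μ i / cv i) *ᵥ
        (Bᵀ *ᵥ ((B * Matrix.diagonal (fun i => x μ i / cv i) * Bᵀ)⁻¹ *ᵥ bv) - cv)) μ := by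
  classical
  have hex : ∀ μ : ℝ, ∃ l, B *ᵥ Xm B cv s (l, μ) = bv :=
    exists_dual B cv s hn hcv hs hT hsb
  set Λ : ℝ → Fin m → ℝ := fun μ => Classical.choose (hex μ) with hΛ
  have hΛspec : ∀ μ, B *ᵥ Xm B cv s (Λ μ, μ) = bv := fun μ => Classical.choose_spec (hex μ)
  set x : ℝ → Fin n → ℝ := fun μ => Xm B cv s (Λ μ, μ) with hxdef
  have hzero : Xm B cv s (0, 0) = s := by
    funext i
    show s i * Real.exp (coordL B cv i (0, 0)) = s i
    rw [coordL_apply]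
    simp [Matrix.mulVec_zero]
  refine ⟨x, ?_, ?_⟩
  · have h0 : B *ᵥ Xm B cv s (0, 0) = bv := by rw [hzero, hsb]
    have hΛ0 := dual_unique B cv s hcv hs hT (hΛspec 0) h0
    show Xm B cv s (Λ 0, 0) = s
    rw [hΛ0, hzero]
  · intro μ
    refine ⟨hΛspec μ, Xm_pos B cv s hs _, ?_, ?_⟩
    · intro z hz hznn
      exact primal_opt B cv s hcv hs hz hznn (hΛspec μ)
    · obtain ⟨g, hg1, hg2⟩ := deriv_part B cv s hcv hs hT (hΛspec μ)
      have hcongr : x =ᶠ[nhds μ] (fun μ' => Xm B cv s (g μ', μ')) := by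
        filter_upwards [hg1] with μ' hμ'
        show Xm B cv s (Λ μ', μ') = Xm B cv s (g μ', μ')
        rw [dual_unique B cv s hcv hs hT (hΛspec μ') hμ']
      exact hg2.congr_of_eventuallyEq hcongr

end calcsec

lemma transpose_mulVec_inj {m n : ℕ} (B : Matrix (Fin m) (Fin n) ℝ) (h : B.rank = m) :
    Function.Injective (Bᵀ.mulVec) := by
  rw [Matrix.mulVec_injective_iff]
  change LinearIndependent ℝ (fun i => B i)
  rw [linearIndependent_iff_card_eq_finrank_span]
  have hr := B.rank_eq_finrank_span_row
  rw [h] at hr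
  simp only [Set.finrank, Fintype.card_fin]
  rw [show (Set.range fun i => B i) = Set.range B from rfl]
  exact hr

lemma entObj_eq_sum {n : ℕ} (c : Fin n → ℤ) (s : Fin n → ℝ) (μ : ℝ) (z : Fin n → ℝ) :
    entObj c s μ z = ∑ i, ent1 ((c i : ℝ)) (s i) μ (z i) := by
  unfold entObj ent1
  rw [dotProduct, Finset.mul_sum, ← Finset.sum_add_distrib, ← Finset.sum_sub_distrib]

theorem physarum_is_entropy_barrier_path {m n : ℕ} (A : Matrix (Fin m) (Fin n) ℤ)
    (hrank : (rmat A).rank = m)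
    (b : Fin m → ℤ) (c : Fin n → ℤ) (hc : ∀ i, 0 < c i)
    (s : Fin n → ℝ) (hs : ∀ i, 0 < s i)
    (hsb : rmat A *ᵥ s = fun j => (b j : ℝ)) :
    ∃ x : ℝ → Fin n → ℝ,
      x 0 = s ∧
      ∀ μ ∈ Set.Ici (0 : ℝ),
        ((rmat A *ᵥ x μ = fun j => (b j : ℝ)) ∧ (∀ i, 0 < x μ i)) ∧
        (∀ z : Fin n → ℝ, (rmat A *ᵥ z = fun j => (b j : ℝ)) → (∀ i, 0 ≤ z i) →
          entObj c s μ (x μ) ≤ entObj c s μ z ∧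
          (entObj c s μ z = entObj c s μ (x μ) → z = x μ)) ∧
        HasDerivWithinAt x
          (physW (fun i => (c i : ℝ)) (x μ) *ᵥ
            ((rmat A)ᵀ *ᵥ ((rmat A * physW (fun i => (c i : ℝ)) (x μ) * (rmat A)ᵀ)⁻¹ *ᵥ
              fun j => (b j : ℝ)) - fun i => (c i : ℝ)))
          (Set.Ici 0) μ := by
  classical
  rcases Nat.eq_zero_or_pos n with hn0 | hn
  · -- degenerate case n = 0 (hence m = 0)
    subst hn0
    have hm : m = 0 := by
      have h1 := (rmat A).rank_le_card_width
      rw [hrank] at h1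
      simpa using h1
    subst hm
    refine ⟨fun _ => s, rfl, fun μ _ => ?_⟩
    refine ⟨⟨funext fun j => j.elim0, fun i => i.elim0⟩, ?_, ?_⟩
    · intro z hz hznn
      have hz' : z = s := funext fun i => i.elim0
      have he : ∀ w : Fin 0 → ℝ, entObj c s μ w = 0 := by
        intro w
        simp [entObj, dotProduct]
      constructor
      · rw [he, he]
      · intro _
        exact hz'
    · have hV : (physW (fun i => ((c i : ℝ))) s *ᵥ
          ((rmat A)ᵀ *ᵥ ((rmat A * physW (fun i => ((c i : ℝ))) s * (rmat A)ᵀ)⁻¹ *ᵥ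
            fun j => ((b j : ℝ))) - fun i => ((c i : ℝ)))) = 0 :=
        funext fun i => i.elim0
      rw [hV]
      exact hasDerivWithinAt_const _ _ _
  · set bv : Fin m → ℝ := fun j => ((b j : ℝ)) with hbv
    set cvv : Fin n → ℝ := fun i => ((c i : ℝ)) with hcvv
    have hcv : ∀ i, 0 < cvv i := fun i => by
      have := hc i
      simp only [hcvv]
      exact_mod_cast this
    have hT : Function.Injective ((rmat A)ᵀ.mulVec) := transpose_mulVec_inj (rmat A) hrank
    obtain ⟨x, hx0, hxall⟩ := main_aux (rmat A) cvv s hn hcv hs hT hsb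
    refine ⟨x, hx0, fun μ _ => ?_⟩
    obtain ⟨hfeas, hpos, hopt, hder⟩ := hxall μ
    refine ⟨⟨hfeas, hpos⟩, ?_, ?_⟩
    · intro z hz hznn
      have h := hopt z hz hznn
      rw [entObj_eq_sum, entObj_eq_sum]
      exact ⟨h.1, h.2⟩
    · exact hder.hasDerivWithinAt
end
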